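/- arXiv:1307.0657 — 14 statements merged into one kernel-verified Lean document; each statement's English description precedes it below -/
import Mathlib

section
/- If f : (0,1) → ℝ satisfies |f(x) + (1-x)^α f(y/(1-x)) - f(y) - (1-y)^α f(x/(1-y))| ≤ ε for all (x,y) with x, y, x+y ∈ (0,1), and F : ℝ₊₊² → ℝ is defined by F(u,v) = (u+v)^α f(v/(u+v)), then |F(u+v, w) + F(u, v) - F(u+w, v) - F(u, w)| ≤ ε(u+v+w)^α for all u, v, w > 0. -/
theorem stmt_0 (α ε : ℝ) (hε : 0 ≤ ε) (f : ℝ → ℝ) (F : ℝ → ℝ → ℝ)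
    (hf : ∀ x y : ℝ, 0 < x → 0 < y → x + y < 1 →
      |f x + (1 - x) ^ α * f (y / (1 - x)) - f y - (1 - y) ^ α * f (x / (1 - y))| ≤ ε)
    (hF : ∀ u v : ℝ, 0 < u → 0 < v → F u v = (u + v) ^ α * f (v / (u + v))) :
    ∀ u v w : ℝ, 0 < u → 0 < v → 0 < w →
      |F (u + v) w + F u v - F (u + w) v - F u w| ≤ ε * (u + v + w) ^ α := by
  intro u v w hu hv hw
  have huv : (0:ℝ) < u + v := by linarith
  have huw : (0:ℝ) < u + w := by linarith
  have hs : (0:ℝ) < u + v + w := by linarith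
  set s : ℝ := u + v + w with hsdef
  have h1 : w / s + v / s < 1 := by
    rw [← add_div, div_lt_one hs]; linarith
  have key := hf (w / s) (v / s) (by positivity) (by positivity) h1
  have e1 : 1 - w / s = (u + v) / s := by field_simp; ring
  have e2 : 1 - v / s = (u + w) / s := by field_simp; ring
  have a1 : (v / s) / ((u + v) / s) = v / (u + v) := by
    field_simp
  have a2 : (w / s) / ((u + w) / s) = w / (u + w) := by
    field_simp
  rw [e1, e2, a1, a2, Real.div_rpow huv.le hs.le, Real.div_rpow huw.le hs.le] at key
  have hsα : (0:ℝ) < s ^ α := Real.rpow_pos_of_pos hs α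
  rw [hF _ _ huv hw, hF _ _ hu hv, hF _ _ huw hv, hF _ _ hu hw, ← hsdef]
  have heq : (s) ^ α * f (w / s) + (u + v) ^ α * f (v / (u + v)) -
      ((u + w) + v) ^ α * f (v / ((u + w) + v)) - (u + w) ^ α * f (w / (u + w)) =
      s ^ α * (f (w / s) + (u + v) ^ α / s ^ α * f (v / (u + v)) - f (v / s) -
        (u + w) ^ α / s ^ α * f (w / (u + w))) := by
    have h3 : (u + w) + v = s := by rw [hsdef]; ring
    rw [h3]
    field_simp
  rw [heq]
  rw [abs_mul, abs_of_pos hsα]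
  calc s ^ α * |_| ≤ s ^ α * ε := by
        exact mul_le_mul_of_nonneg_left key hsα.le
    _ = ε * s ^ α := mul_comm _ _
end

section
/- Suppose F : ℝ₊₊² → ℝ satisfies |F(u+v, w) + F(u, v) - F(u+w, v) - F(u, w)| ≤ ε(u+v+w)^α for all u, v, w > 0. Define g(u) = F(u,1) - F(1,u) and G(u,v) = F(u,v) + g(v). Then |G(u,v) - G(v,u)| ≤ 3ε(u+v+1)^α for all u, v > 0. -/
theorem stmt_2 (α ε : ℝ) (hε : 0 ≤ ε) (F : ℝ → ℝ → ℝ)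
    (hF : ∀ u v w : ℝ, 0 < u → 0 < v → 0 < w →
      |F (u + v) w + F u v - F (u + w) v - F u w| ≤ ε * (u + v + w) ^ α)
    (g : ℝ → ℝ) (hg : ∀ u : ℝ, 0 < u → g u = F u 1 - F 1 u)
    (G : ℝ → ℝ → ℝ) (hG : ∀ u v : ℝ, 0 < u → 0 < v → G u v = F u v + g v) :
    ∀ u v : ℝ, 0 < u → 0 < v → |G u v - G v u| ≤ 3 * ε * (u + v + 1) ^ α := by
  intro u v hu hv
  have h1 := hF 1 u v one_pos hu hv
  have h2 := hF u 1 v hu one_pos hv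
  have h3 := hF v 1 u hv one_pos hu
  rw [hG u v hu hv, hG v u hv hu, hg u hu, hg v hv]
  simp only [show (1:ℝ) + u = u + 1 from by ring, show (1:ℝ) + v = v + 1 from by ring,
    show v + u = u + v from by ring] at h1 h2 h3
  rw [show (u + 1 + v : ℝ) = u + v + 1 from by ring] at h1 h2
  rw [show (v + 1 + u : ℝ) = u + v + 1 from by ring] at h3
  rw [abs_le] at h1 h2 h3 ⊢
  constructor <;> nlinarith [h1.1, h1.2, h2.1, h2.2, h3.1, h3.2]
end

section
/- Let α < 0 and suppose g : ℝ₊₊ → ℝ satisfies g(uv) = g(u)v^α + g(v) for all u, v > 0. Then there exists c ∈ ℝ such that g(u) = c(u^α - 1) for all u > 0; in fact c = g(2)/(2^α - 1). -/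
theorem stmt_3 (α : ℝ) (hα : α < 0) (g : ℝ → ℝ)
    (hg : ∀ u v : ℝ, 0 < u → 0 < v → g (u * v) = g u * v ^ α + g v) :
    ∃ c : ℝ, c = g 2 / (2 ^ α - 1) ∧ ∀ u : ℝ, 0 < u → g u = c * (u ^ α - 1) := by
  have h2 : (2:ℝ) ^ α < 1 := Real.rpow_lt_one_of_one_lt_of_neg (by norm_num) hα
  have hne : (2:ℝ) ^ α - 1 ≠ 0 := by linarith
  refine ⟨g 2 / (2 ^ α - 1), rfl, fun u hu => ?_⟩
  have e1 := hg u 2 hu (by norm_num)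
  have e2 := hg 2 u (by norm_num) hu
  rw [mul_comm] at e2
  have key : g u * ((2:ℝ) ^ α - 1) = g 2 * (u ^ α - 1) := by
    rw [e1] at e2; ring_nf; ring_nf at e2; linarith
  field_simp
  linarith [key]
end

section
/- Let α < 0. Suppose g : ℝ₊₊ → ℝ and F : ℝ₊₊² → ℝ satisfy: F is α-homogeneous (F(tu,tv) = t^α F(u,v)), g(u) = F(u,1) - F(1,u), and |F(u,v) + g(v) - F(v,u) - g(u)| ≤ 3ε(u+v+1)^α for all u, v > 0. Then g(u) = lim_{t→0⁺} t^{-α}(g(tu) - g(t)) for every u > 0, and g satisfies the functional equation g(uv) = g(u)v^α + g(v) for all u, v > 0. -/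
open Filter Real

theorem stmt_4 (α ε : ℝ) (hα : α < 0) (hε : 0 ≤ ε) (g : ℝ → ℝ) (F : ℝ → ℝ → ℝ)
    (hhom : ∀ t u v : ℝ, 0 < t → 0 < u → 0 < v → F (t * u) (t * v) = t ^ α * F u v)
    (hg : ∀ u : ℝ, 0 < u → g u = F u 1 - F 1 u)
    (hb : ∀ u v : ℝ, 0 < u → 0 < v →
      |F u v + g v - F v u - g u| ≤ 3 * ε * (u + v + 1) ^ α) :
    (∀ u : ℝ, 0 < u →
      Filter.Tendsto (fun t : ℝ => t ^ (-α) * (g (t * u) - g t))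
        (nhdsWithin 0 (Set.Ioi 0)) (nhds (g u))) ∧
    (∀ u v : ℝ, 0 < u → 0 < v → g (u * v) = g u * v ^ α + g v) := by
  have hκ : ∀ t u : ℝ, 0 < t → 0 < u →
      |t ^ α * g u + g t - g (t * u)| ≤ 3 * ε * (t * u + t + 1) ^ α := by
    intro t u ht hu
    have h1 := hhom t u 1 ht hu one_pos
    have h2 := hhom t 1 u ht one_pos hu
    rw [mul_one] at h1 h2
    have h := hb (t * u) t (mul_pos ht hu) ht
    rw [h1, h2] at h
    rw [hg u hu]
    convert h using 2
    ring
  have hlim : ∀ u : ℝ, 0 < u →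
      Filter.Tendsto (fun t : ℝ => t ^ (-α) * (g (t * u) - g t))
        (nhdsWithin 0 (Set.Ioi 0)) (nhds (g u)) := by
    intro u hu
    rw [← tendsto_sub_nhds_zero_iff]
    apply squeeze_zero_norm' (a := fun t : ℝ => 3 * ε * (t ^ (-α) * (t * u + t + 1) ^ α))
    · filter_upwards [self_mem_nhdsWithin] with t ht
      have ht : (0:ℝ) < t := ht
      have h := hκ t u ht hu
      have htα : t ^ (-α) * t ^ α = 1 := by
        rw [← Real.rpow_add ht]; simp
      have heq : t ^ (-α) * (g (t * u) - g t) - g u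
          = -(t ^ (-α) * (t ^ α * g u + g t - g (t * u))) := by
        linear_combination g u * htα
      rw [Real.norm_eq_abs, heq, abs_neg, abs_mul,
        abs_of_nonneg (Real.rpow_nonneg ht.le _)]
      calc t ^ (-α) * |t ^ α * g u + g t - g (t * u)|
          ≤ t ^ (-α) * (3 * ε * (t * u + t + 1) ^ α) :=
            mul_le_mul_of_nonneg_left h (Real.rpow_nonneg ht.le _)
        _ = 3 * ε * (t ^ (-α) * (t * u + t + 1) ^ α) := by ring
    · have ta : Filter.Tendsto (fun t : ℝ => t ^ (-α)) (nhds 0) (nhds 0) := by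
        have := (Real.continuousAt_rpow_const 0 (-α)
          (Or.inr (neg_pos.2 hα).le)).tendsto
        rwa [Real.zero_rpow (ne_of_gt (neg_pos.2 hα))] at this
      have tb : Filter.Tendsto (fun t : ℝ => (t * u + t + 1) ^ α) (nhds 0) (nhds 1) := by
        have hin : Filter.Tendsto (fun t : ℝ => t * u + t + 1) (nhds 0) (nhds 1) := by
          have : Continuous (fun t : ℝ => t * u + t + 1) := by continuity
          have := this.tendsto 0
          simpa using this
        have hc := (Real.continuousAt_rpow_const 1 α (Or.inl one_ne_zero)).tendsto
        rw [Real.one_rpow] at hc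
        exact hc.comp hin
      have : Filter.Tendsto (fun t : ℝ => 3 * ε * (t ^ (-α) * (t * u + t + 1) ^ α))
          (nhds 0) (nhds (3 * ε * (0 * 1))) := (ta.mul tb).const_mul _
      simpa using this.mono_left nhdsWithin_le_nhds
  refine ⟨hlim, ?_⟩
  intro u v hu hv
  have h1 := hlim (u * v) (mul_pos hu hv)
  have hmap : Filter.Tendsto (fun t : ℝ => t * v)
      (nhdsWithin 0 (Set.Ioi 0)) (nhdsWithin 0 (Set.Ioi 0)) := by
    rw [tendsto_nhdsWithin_iff]
    constructor
    · have : Filter.Tendsto (fun t : ℝ => t * v) (nhds 0) (nhds (0 * v)) :=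
        (continuous_id.mul continuous_const).tendsto 0
      rw [zero_mul] at this
      exact this.mono_left nhdsWithin_le_nhds
    · filter_upwards [self_mem_nhdsWithin] with t ht
      exact mul_pos ht hv
  have h2 : Filter.Tendsto (fun t : ℝ =>
      v ^ α * ((t * v) ^ (-α) * (g ((t * v) * u) - g (t * v))) + t ^ (-α) * (g (t * v) - g t))
      (nhdsWithin 0 (Set.Ioi 0)) (nhds (v ^ α * g u + g v)) :=
    (((hlim u hu).comp hmap).const_mul _).add (hlim v hv)
  have heq : ∀ᶠ t in nhdsWithin (0:ℝ) (Set.Ioi 0),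
      v ^ α * ((t * v) ^ (-α) * (g ((t * v) * u) - g (t * v))) + t ^ (-α) * (g (t * v) - g t)
      = t ^ (-α) * (g (t * (u * v)) - g t) := by
    filter_upwards [self_mem_nhdsWithin] with t ht
    have ht : (0:ℝ) < t := ht
    have hmr : (t * v) ^ (-α) = t ^ (-α) * v ^ (-α) :=
      Real.mul_rpow ht.le hv.le
    have hvα : v ^ α * v ^ (-α) = 1 := by
      rw [← Real.rpow_add hv]; simp
    have harg : (t * v) * u = t * (u * v) := by ring
    rw [harg, hmr]
    linear_combination (t ^ (-α) * (g (t * (u * v)) - g (t * v))) * hvα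
  have h2' := h2.congr' heq
  have := tendsto_nhds_unique h1 h2'
  rw [this, mul_comm (v ^ α)]
end

section
/- Let α ∉ {0,1}, ε ≥ 0, and f₀ : (0,1) → ℝ. Suppose |F₀(p,q)| ≤ M for all p, q ∈ (0,1), where F₀(p,q) = f₀(p) + p^α f₀(q) - f₀(pq) - (1-pq)^α f₀((1-p)/(1-pq)), and |f₀(x) - f₀(1-x)| ≤ N for all x ∈ (0,1). Then for all p, q ∈ (0,1), |f₀(p)(q^α + (1-q)^α - 1) - f₀(q)(p^α + (1-p)^α - 1)| ≤ 2M + (1-pq)^α (M + N). -/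
theorem stmt_6 (α ε M N : ℝ) (hα : α ≠ 0) (hα1 : α ≠ 1) (hε : 0 ≤ ε)
    (hM : 0 ≤ M) (hN : 0 ≤ N) (f₀ : ℝ → ℝ)
    (hF₀ : ∀ p q : ℝ, p ∈ Set.Ioo (0 : ℝ) 1 → q ∈ Set.Ioo (0 : ℝ) 1 →
      |f₀ p + p ^ α * f₀ q - f₀ (p * q) -
        (1 - p * q) ^ α * f₀ ((1 - p) / (1 - p * q))| ≤ M)
    (hsym : ∀ x : ℝ, x ∈ Set.Ioo (0 : ℝ) 1 → |f₀ x - f₀ (1 - x)| ≤ N) :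
    ∀ p q : ℝ, p ∈ Set.Ioo (0 : ℝ) 1 → q ∈ Set.Ioo (0 : ℝ) 1 →
      |f₀ p * (q ^ α + (1 - q) ^ α - 1) - f₀ q * (p ^ α + (1 - p) ^ α - 1)| ≤
        2 * M + (1 - p * q) ^ α * (M + N) := by
  rintro p q ⟨hp0, hp1⟩ ⟨hq0, hq1⟩
  have hpq1 : p * q < 1 := by nlinarith
  have hpq0 : 0 < p * q := mul_pos hp0 hq0
  have hden : (0:ℝ) < 1 - p * q := by linarith
  have hdne : (1:ℝ) - p * q ≠ 0 := ne_of_gt hden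
  set t : ℝ := (1 - p) / (1 - p * q) with ht_def
  set s : ℝ := (1 - q) / (1 - p * q) with hs_def
  have ht0 : 0 < t := div_pos (by linarith) hden
  have ht1 : t < 1 := by
    rw [ht_def, div_lt_one hden]; nlinarith
  have hs0 : 0 < s := div_pos (by linarith) hden
  have hs1 : s < 1 := by
    rw [hs_def, div_lt_one hden]; nlinarith
  have hsp : s * p = 1 - t := by
    rw [hs_def, ht_def, div_mul_eq_mul_div, eq_sub_iff_add_eq, ← add_div, div_eq_iff hdne]; ring
  have h1t : 1 - s * p = t := by rw [hsp]; ring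
  have hq' : (1 - s) / t = q := by
    rw [div_eq_iff (ne_of_gt ht0), hs_def, ht_def]
    rw [one_sub_div hdne, mul_div_assoc', div_left_inj' hdne]
    ring
  have h1 := hF₀ p q ⟨hp0, hp1⟩ ⟨hq0, hq1⟩
  have h2 := hF₀ q p ⟨hq0, hq1⟩ ⟨hp0, hp1⟩
  have h3 := hF₀ s p ⟨hs0, hs1⟩ ⟨hp0, hp1⟩
  have h4 := hsym t ⟨ht0, ht1⟩
  rw [mul_comm q p] at h2
  rw [hsp, show (1:ℝ) - (1 - t) = t from by ring, hq'] at h3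
  -- change of variables in h2's last factor
  have hs_eq : (1 - q) / (1 - p * q) = s := rfl
  rw [hs_eq] at h2
  -- rpow factorizations
  have hDs : (1 - p * q) ^ α * s ^ α = (1 - q) ^ α := by
    rw [← Real.mul_rpow (le_of_lt hden) (le_of_lt hs0)]
    congr 1
    rw [hs_def]; field_simp
  have hDt : (1 - p * q) ^ α * t ^ α = (1 - p) ^ α := by
    rw [← Real.mul_rpow (le_of_lt hden) (le_of_lt ht0)]
    congr 1
    rw [ht_def]; field_simp
  have hD0 : 0 ≤ (1 - p * q) ^ α := Real.rpow_nonneg (le_of_lt hden) α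
  set D : ℝ := (1 - p * q) ^ α with hD_def
  set A : ℝ := f₀ p + p ^ α * f₀ q - f₀ (p * q) - D * f₀ t with hA_def
  set B : ℝ := f₀ q + q ^ α * f₀ p - f₀ (p * q) - D * f₀ s with hB_def
  set C : ℝ := f₀ s + s ^ α * f₀ p - f₀ (1 - t) - t ^ α * f₀ q with hC_def
  set X : ℝ := f₀ t - f₀ (1 - t) with hX_def
  have key : f₀ p * (q ^ α + (1 - q) ^ α - 1) - f₀ q * (p ^ α + (1 - p) ^ α - 1)
      = -(A - B) - D * (X - C) := by
    rw [← hDs, ← hDt, hA_def, hB_def, hC_def, hX_def]; ring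
  rw [key]
  have hX' : |D * X| ≤ D * N := by
    rw [abs_mul, abs_of_nonneg hD0]
    exact mul_le_mul_of_nonneg_left h4 hD0
  have hC' : |D * C| ≤ D * M := by
    rw [abs_mul, abs_of_nonneg hD0]
    exact mul_le_mul_of_nonneg_left h3 hD0
  have e1 := abs_le.mp h1
  have e2 := abs_le.mp h2
  have e3 := abs_le.mp hX'
  have e4 := abs_le.mp hC'
  rw [abs_le]
  constructor <;> linarith [e1.1, e1.2, e2.1, e2.2, e3.1, e3.2, e4.1, e4.2, hD0]
end

section
/- Suppose g : ℝ₊₊ → ℝ satisfies |g(tv) - g(v) - g(t)| ≤ 6ε for all t, v > 0. Then there exists a logarithmic function l : ℝ₊₊ → ℝ (i.e., l(xy) = l(x) + l(y) for all x, y > 0) such that |g(u) - l(u)| ≤ 6ε for all u > 0. -/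
open Filter Topology

/-- Hyers' theorem on ℝ: stability of the additive Cauchy equation. -/
lemma hyers_aux (δ : ℝ) (hδ : 0 ≤ δ) (f : ℝ → ℝ)
    (hf : ∀ x y : ℝ, |f (x + y) - f x - f y| ≤ δ) :
    ∃ a : ℝ → ℝ, (∀ x y : ℝ, a (x + y) = a x + a y) ∧ ∀ x : ℝ, |f x - a x| ≤ δ := by
  set u : ℕ → ℝ → ℝ := fun n x => f (2 ^ n * x) / 2 ^ n with hu_def
  have key : ∀ (n : ℕ) (x : ℝ), |u (n + 1) x - u n x| ≤ δ / 2 ^ (n + 1) := by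
    intro n x
    have h := hf (2 ^ n * x) (2 ^ n * x)
    have h2 : (2 : ℝ) ^ n * x + 2 ^ n * x = 2 ^ (n + 1) * x := by ring
    rw [h2] at h
    have hpow : (0 : ℝ) < 2 ^ (n + 1) := by positivity
    have heq : u (n + 1) x - u n x
        = (f (2 ^ (n + 1) * x) - f (2 ^ n * x) - f (2 ^ n * x)) / 2 ^ (n + 1) := by
      simp only [hu_def]
      field_simp
      ring
    rw [heq, abs_div, abs_of_pos hpow, div_le_div_iff₀ hpow hpow]
    nlinarith [abs_nonneg (f (2 ^ (n + 1) * x) - f (2 ^ n * x) - f (2 ^ n * x))]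
  have hcauchy : ∀ x : ℝ, CauchySeq (fun n => u n x) := by
    intro x
    apply cauchySeq_of_le_geometric (1 / 2) (δ / 2) (by norm_num)
    intro n
    rw [Real.dist_eq, abs_sub_comm]
    calc |u (n + 1) x - u n x| ≤ δ / 2 ^ (n + 1) := key n x
      _ = δ / 2 * (1 / 2) ^ n := by
          rw [div_pow, one_pow, pow_succ]
          ring
  choose a ha using fun x => cauchySeq_tendsto_of_complete (hcauchy x)
  have habs : ∀ (n : ℕ) (x y : ℝ), |u n (x + y) - u n x - u n y| ≤ δ / 2 ^ n := by
    intro n x y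
    have h := hf (2 ^ n * x) (2 ^ n * y)
    have h2 : (2 : ℝ) ^ n * x + 2 ^ n * y = 2 ^ n * (x + y) := by ring
    rw [h2] at h
    have hpow : (0 : ℝ) < 2 ^ n := by positivity
    have heq : u n (x + y) - u n x - u n y
        = (f (2 ^ n * (x + y)) - f (2 ^ n * x) - f (2 ^ n * y)) / 2 ^ n := by
      simp only [hu_def]; field_simp
    rw [heq, abs_div, abs_of_pos hpow]
    gcongr
  refine ⟨a, ?_, ?_⟩
  · intro x y
    have h1 : Tendsto (fun n => u n (x + y) - u n x - u n y) atTop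
        (𝓝 (a (x + y) - a x - a y)) := ((ha (x + y)).sub (ha x)).sub (ha y)
    have h2 : Tendsto (fun n => u n (x + y) - u n x - u n y) atTop (𝓝 0) := by
      apply squeeze_zero_norm (fun n => habs n x y)
      have : Tendsto (fun n : ℕ => δ * (1 / 2) ^ n) atTop (𝓝 0) := by
        simpa using (tendsto_pow_atTop_nhds_zero_of_lt_one (by norm_num : (0:ℝ) ≤ 1/2)
          (by norm_num : (1:ℝ)/2 < 1)).const_mul δ
      refine this.congr fun n => ?_
      rw [div_pow, one_pow, mul_one_div]
    have := tendsto_nhds_unique h1 h2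
    linarith
  · intro x
    have hbound' : ∀ n : ℕ, |u n x - f x| ≤ δ * (1 - (1 / 2) ^ n) := by
      intro n
      induction n with
      | zero => simp [hu_def]
      | succ n ih =>
        have h1 : |u (n + 1) x - f x| ≤ |u (n + 1) x - u n x| + |u n x - f x| := by
          have := abs_add_le (u (n + 1) x - u n x) (u n x - f x)
          simpa using this
        have h2 := key n x
        have h3 : δ / 2 ^ (n + 1) + δ * (1 - (1 / 2) ^ n) = δ * (1 - (1 / 2) ^ (n + 1)) := by
          rw [div_pow, div_pow, one_pow, one_pow, pow_succ]
          field_simp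
          ring
        linarith
    have hbound : ∀ n : ℕ, |u n x - f x| ≤ δ := by
      intro n
      have := hbound' n
      nlinarith [pow_nonneg (by norm_num : (0:ℝ) ≤ 1/2) n, pow_le_one₀ (by norm_num : (0:ℝ) ≤ 1/2) (by norm_num : (1:ℝ)/2 ≤ 1) (n := n)]
    have htend : Tendsto (fun n => |u n x - f x|) atTop (𝓝 |a x - f x|) :=
      ((ha x).sub_const (f x)).abs
    have := le_of_tendsto htend (Eventually.of_forall hbound)
    rwa [abs_sub_comm] at this

theorem stmt_7 (ε : ℝ) (hε : 0 ≤ ε) (g : ℝ → ℝ)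
    (hg : ∀ t v : ℝ, 0 < t → 0 < v → |g (t * v) - g v - g t| ≤ 6 * ε) :
    ∃ l : ℝ → ℝ, (∀ x y : ℝ, 0 < x → 0 < y → l (x * y) = l x + l y) ∧
      ∀ u : ℝ, 0 < u → |g u - l u| ≤ 6 * ε := by
  have hf : ∀ x y : ℝ, |(fun x => g (Real.exp x)) (x + y) - (fun x => g (Real.exp x)) x
      - (fun x => g (Real.exp x)) y| ≤ 6 * ε := by
    intro x y
    have h := hg (Real.exp x) (Real.exp y) (Real.exp_pos x) (Real.exp_pos y)
    simp only [Real.exp_add]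
    have : g (Real.exp x * Real.exp y) - g (Real.exp x) - g (Real.exp y)
        = g (Real.exp x * Real.exp y) - g (Real.exp y) - g (Real.exp x) := by ring
    rw [this]
    exact h
  obtain ⟨a, ha_add, ha_close⟩ := hyers_aux (6 * ε) (by positivity)
    (fun x => g (Real.exp x)) hf
  refine ⟨fun u => a (Real.log u), ?_, ?_⟩
  · intro x y hx hy
    dsimp only
    rw [Real.log_mul hx.ne' hy.ne', ha_add]
  · intro u hu
    have := ha_close (Real.log u)
    simpa [Real.exp_log hu] using this
end

section
/- Let α = 0 and F : ℝ₊₊² → ℝ satisfy F(tu, tv) = F(u,v) for all t, u, v > 0. Define g(u) = F(u,1) - F(1,u) and G(u,v) = F(u,v) + g(v), and assume |G(u,v) - G(v,u)| ≤ 3ε for all u, v > 0. Then |g(tv) - g(v) + g(u) - g(tu)| ≤ 6ε for all t, u, v > 0, and in particular (since g(1) = 0) |g(tv) - g(v) - g(t)| ≤ 6ε for all t, v > 0. -/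
theorem stmt_8 (ε : ℝ) (hε : 0 ≤ ε) (F : ℝ → ℝ → ℝ)
    (hhom : ∀ t u v : ℝ, 0 < t → 0 < u → 0 < v → F (t * u) (t * v) = F u v)
    (g : ℝ → ℝ) (hg : ∀ u : ℝ, 0 < u → g u = F u 1 - F 1 u)
    (G : ℝ → ℝ → ℝ) (hG : ∀ u v : ℝ, 0 < u → 0 < v → G u v = F u v + g v)
    (hb : ∀ u v : ℝ, 0 < u → 0 < v → |G u v - G v u| ≤ 3 * ε) :
    (∀ t u v : ℝ, 0 < t → 0 < u → 0 < v →
      |g (t * v) - g v + g u - g (t * u)| ≤ 6 * ε) ∧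
    (∀ t v : ℝ, 0 < t → 0 < v → |g (t * v) - g v - g t| ≤ 6 * ε) := by
  have key : ∀ t v : ℝ, 0 < t → 0 < v → |g t + g v - g (t * v)| ≤ 3 * ε := by
    intro t v ht hv
    have htv : 0 < t * v := mul_pos ht hv
    have h := hb (t * v) v htv hv
    have e1 : F (t * v) v = F t 1 := by
      have := hhom v t 1 hv ht one_pos
      rw [mul_comm v t] at this
      simpa using this
    have e2 : F v (t * v) = F 1 t := by
      have := hhom v 1 t hv one_pos ht
      rw [mul_comm v t] at this
      simpa using this
    rw [hG (t*v) v htv hv, hG v (t*v) hv htv, e1, e2] at h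
    rw [hg t ht]
    convert h using 2
    ring
  have main : ∀ t u v : ℝ, 0 < t → 0 < u → 0 < v →
      |g (t * v) - g v + g u - g (t * u)| ≤ 6 * ε := by
    intro t u v ht hu hv
    have h1 := key t v ht hv
    have h2 := key t u ht hu
    have : |g (t * v) - g v + g u - g (t * u)| =
        |(g t + g u - g (t * u)) - (g t + g v - g (t * v))| := by ring_nf
    rw [this]
    calc _ ≤ |g t + g u - g (t * u)| + |g t + g v - g (t * v)| := abs_sub _ _
      _ ≤ 3 * ε + 3 * ε := add_le_add h2 h1
      _ = 6 * ε := by ring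
  refine ⟨main, fun t v ht hv => ?_⟩
  have g1 : g 1 = 0 := by rw [hg 1 one_pos]; ring
  have := main t 1 v ht one_pos hv
  rw [g1] at this
  convert this using 2
  ring
end

section
/- Let 0 < α, α ≠ 1, and F : ℝ₊₊² → ℝ satisfy F(tu, tv) = t^α F(u,v). Define g(u) = F(u,1) - F(1,u) and G(u,v) = F(u,v) + g(v), and assume |G(u,v) - G(v,u)| ≤ 3ε(u+v+1)^α for all u, v > 0. Then |t^α g(v) + g(t) - v^α g(t) - g(v)| ≤ 3ε[(t(v+1)+1)^α + (v+2)^α + (v(t+1)+1)^α + (t+2)^α] for all t, v > 0. -/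
theorem stmt_9 (α ε : ℝ) (hα : 0 < α) (hα1 : α ≠ 1) (hε : 0 ≤ ε) (F : ℝ → ℝ → ℝ)
    (hhom : ∀ t u v : ℝ, 0 < t → 0 < u → 0 < v → F (t * u) (t * v) = t ^ α * F u v)
    (g : ℝ → ℝ) (hg : ∀ u : ℝ, 0 < u → g u = F u 1 - F 1 u)
    (G : ℝ → ℝ → ℝ) (hG : ∀ u v : ℝ, 0 < u → 0 < v → G u v = F u v + g v)
    (hb : ∀ u v : ℝ, 0 < u → 0 < v → |G u v - G v u| ≤ 3 * ε * (u + v + 1) ^ α) :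
    ∀ t v : ℝ, 0 < t → 0 < v →
      |t ^ α * g v + g t - v ^ α * g t - g v| ≤
        3 * ε * ((t * (v + 1) + 1) ^ α + (v + 2) ^ α +
          (v * (t + 1) + 1) ^ α + (t + 2) ^ α) := by
  intro t v ht hv
  have htv : 0 < t * v := mul_pos ht hv
  have hvt : 0 < v * t := mul_pos hv ht
  -- key estimate: |s^α g w - g (s*w) + g s| ≤ 3 ε (s*w + s + 1)^α
  have key : ∀ s w : ℝ, 0 < s → 0 < w →
      |s ^ α * g w - g (s * w) + g s| ≤ 3 * ε * (s * w + s + 1) ^ α := by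
    intro s w hs hw
    have h := hb (s * w) s (mul_pos hs hw) hs
    rw [hG _ _ (mul_pos hs hw) hs, hG _ _ hs (mul_pos hs hw)] at h
    have e1 : F (s * w) s = s ^ α * F w 1 := by
      have := hhom s w 1 hs hw one_pos
      simpa using this
    have e2 : F s (s * w) = s ^ α * F 1 w := by
      have := hhom s 1 w hs one_pos hw
      simpa using this
    rw [e1, e2] at h
    have e3 : s ^ α * (F w 1 - F 1 w) - g (s * w) + g s =
        s ^ α * F w 1 + g s - (s ^ α * F 1 w + g (s * w)) := by ring
    rw [hg w hw, e3]
    exact h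
  have h1 := key t v ht hv
  have h2 := key v t hv ht
  have hcomm : v * t = t * v := mul_comm v t
  rw [hcomm] at h2
  have hpos1 : (0:ℝ) ≤ (v + 2) ^ α := Real.rpow_nonneg (by linarith) _
  have hpos2 : (0:ℝ) ≤ (t + 2) ^ α := Real.rpow_nonneg (by linarith) _
  have hε3 : (0:ℝ) ≤ 3 * ε := by linarith
  have heq : t ^ α * g v + g t - v ^ α * g t - g v =
      (t ^ α * g v - g (t * v) + g t) - (v ^ α * g t - g (t * v) + g v) := by ring
  rw [heq]
  calc |(t ^ α * g v - g (t * v) + g t) - (v ^ α * g t - g (t * v) + g v)|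
      ≤ |t ^ α * g v - g (t * v) + g t| + |v ^ α * g t - g (t * v) + g v| :=
        abs_sub _ _
    _ ≤ 3 * ε * (t * v + t + 1) ^ α + 3 * ε * (t * v + v + 1) ^ α := by
        exact add_le_add h1 h2
    _ ≤ 3 * ε * ((t * (v + 1) + 1) ^ α + (v + 2) ^ α +
          (v * (t + 1) + 1) ^ α + (t + 2) ^ α) := by
        have e1 : t * v + t + 1 = t * (v + 1) + 1 := by ring
        have e2 : t * v + v + 1 = v * (t + 1) + 1 := by ring
        rw [e1, e2]
        nlinarith [mul_nonneg hε3 hpos1, mul_nonneg hε3 hpos2,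
          mul_nonneg hε3 (Real.rpow_nonneg (show (0:ℝ) ≤ t*(v+1)+1 by nlinarith) α),
          mul_nonneg hε3 (Real.rpow_nonneg (show (0:ℝ) ≤ v*(t+1)+1 by nlinarith) α)]
end

section
/- Let 0 < α, α ≠ 1, ε ≥ 0, and g : ℝ₊₊ → ℝ satisfy |t^α g(v) + g(t) - v^α g(t) - g(v)| ≤ 3ε[(t(v+1)+1)^α + (v+2)^α + (v(t+1)+1)^α + (t+2)^α] for all t, v > 0. Then with c = g(1/2)/(2^{-α} - 1), the inequality |g(v) - c(v^α - 1)| ≤ 4·3^{α+1}ε/|2^{-α} - 1| holds for all v ∈ (0,1). -/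
theorem stmt_10 (α ε : ℝ) (hα : 0 < α) (hα1 : α ≠ 1) (hε : 0 ≤ ε) (g : ℝ → ℝ)
    (hb : ∀ t v : ℝ, 0 < t → 0 < v →
      |t ^ α * g v + g t - v ^ α * g t - g v| ≤
        3 * ε * ((t * (v + 1) + 1) ^ α + (v + 2) ^ α +
          (v * (t + 1) + 1) ^ α + (t + 2) ^ α)) :
    ∀ v : ℝ, v ∈ Set.Ioo (0 : ℝ) 1 →
      |g v - g (1 / 2) / ((2 : ℝ) ^ (-α) - 1) * (v ^ α - 1)| ≤
        4 * 3 ^ (α + 1) * ε / |(2 : ℝ) ^ (-α) - 1| := by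
  intro v hv
  obtain ⟨hv0, hv1⟩ := hv
  have key := hb (1/2) v (by norm_num) hv0
  have h2 : ((1:ℝ)/2) ^ α = (2:ℝ) ^ (-α) := by
    rw [Real.rpow_neg (by norm_num : (0:ℝ) ≤ 2), ← Real.inv_rpow (by norm_num : (0:ℝ) ≤ 2)]
    norm_num
  have hDlt : (2:ℝ) ^ (-α) < 1 :=
    Real.rpow_lt_one_of_one_lt_of_neg (by norm_num) (by linarith)
  have hDneg : (2:ℝ) ^ (-α) - 1 < 0 := by linarith
  have hD0 : (2:ℝ) ^ (-α) - 1 ≠ 0 := ne_of_lt hDneg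
  have hDabs : 0 < |(2:ℝ) ^ (-α) - 1| := abs_pos.mpr hD0
  have heq : g v - g (1/2) / ((2:ℝ) ^ (-α) - 1) * (v ^ α - 1) =
      (((1:ℝ)/2) ^ α * g v + g (1/2) - v ^ α * g (1/2) - g v) / ((2:ℝ) ^ (-α) - 1) := by
    rw [h2]
    field_simp
    ring
  -- bound each rpow term by 3^α
  have hbound : ∀ x : ℝ, 0 ≤ x → x ≤ 3 → x ^ α ≤ (3:ℝ) ^ α := fun x hx hx3 =>
    Real.rpow_le_rpow hx hx3 hα.le
  have h1 : ((1:ℝ)/2 * (v + 1) + 1) ^ α ≤ (3:ℝ) ^ α := hbound _ (by linarith) (by linarith)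
  have h3 : (v + 2) ^ α ≤ (3:ℝ) ^ α := hbound _ (by linarith) (by linarith)
  have h4 : (v * ((1:ℝ)/2 + 1) + 1) ^ α ≤ (3:ℝ) ^ α := hbound _ (by nlinarith) (by nlinarith)
  have h5 : ((1:ℝ)/2 + 2) ^ α ≤ (3:ℝ) ^ α := hbound _ (by norm_num) (by norm_num)
  have hRHS : 3 * ε * (((1:ℝ)/2 * (v + 1) + 1) ^ α + (v + 2) ^ α +
      (v * ((1:ℝ)/2 + 1) + 1) ^ α + ((1:ℝ)/2 + 2) ^ α) ≤ 4 * 3 ^ (α + 1) * ε := by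
    have h31 : (3:ℝ) ^ (α + 1) = 3 ^ α * 3 := by
      rw [Real.rpow_add (by norm_num : (0:ℝ) < 3), Real.rpow_one]
    rw [h31]
    nlinarith [hbound 0 le_rfl (by norm_num), Real.rpow_nonneg (by norm_num : (0:ℝ) ≤ 3) α]
  have hkey2 : |((1:ℝ)/2) ^ α * g v + g (1/2) - v ^ α * g (1/2) - g v| ≤
      4 * 3 ^ (α + 1) * ε := le_trans key hRHS
  rw [heq, abs_div]
  exact div_le_div_of_nonneg_right hkey2 hDabs.le |>.trans_eq rfl
end

section
/- Let α > 0, α ≠ 1, ε ≥ 0. If f : (0,1) → ℝ satisfies |f(x) + (1-x)^α f(y/(1-x)) - f(y) - (1-y)^α f(x/(1-y))| ≤ ε for all (x,y) with x, y, x+y ∈ (0,1), then there exist a, b ∈ ℝ such that |f(x) - [a x^α + b(1-x)^α - b]| ≤ K(α)ε for all x ∈ (0,1), where K(α) = |2^{1-α} - 1|^{-1}(3 + 12·2^α + 32·3^{α+1}/|2^{-α} - 1|). -/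
noncomputable def Psi (f : ℝ → ℝ) (t : ℝ) : ℝ := f t - f (1 - t)

noncomputable def Phi (α : ℝ) (f : ℝ → ℝ) (p q : ℝ) : ℝ :=
  (p + q) ^ α * Psi f (p / (p + q))

noncomputable def phiF (α : ℝ) (f : ℝ → ℝ) (p : ℝ) : ℝ := Phi α f p 1

lemma Psi_neg (f : ℝ → ℝ) (s : ℝ) : Psi f (1 - s) = - Psi f s := by
  unfold Psi
  have h : (1 : ℝ) - (1 - s) = s := by ring
  rw [h]; ring

lemma Phi_antisymm (α : ℝ) (f : ℝ → ℝ) {p q : ℝ} (hp : 0 < p) (hq : 0 < q) :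
    Phi α f q p = - Phi α f p q := by
  unfold Phi
  have hpq : (0:ℝ) < p + q := by linarith
  have h1 : q / (q + p) = 1 - p / (p + q) := by
    rw [show q + p = p + q from by ring, eq_sub_iff_add_eq, ← add_div,
      show q + p = p + q from by ring, div_self (ne_of_gt hpq)]
  rw [h1, Psi_neg]
  have h2 : q + p = p + q := by ring
  rw [h2]; ring

lemma Phi_hom (α : ℝ) (f : ℝ → ℝ) {l p q : ℝ} (hl : 0 < l) (hp : 0 < p) (hq : 0 < q) :
    Phi α f (l*p) (l*q) = l ^ α * Phi α f p q := by
  unfold Phi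
  have hpq : (0:ℝ) < p + q := by linarith
  have h1 : l*p + l*q = l * (p+q) := by ring
  rw [h1, Real.mul_rpow hl.le hpq.le]
  have h2 : l*p/(l*(p+q)) = p/(p+q) := mul_div_mul_left _ _ (ne_of_gt hl)
  rw [h2]; ring

lemma cocycle1 (α ε : ℝ) (f : ℝ → ℝ)
    (hf : ∀ x y : ℝ, 0 < x → 0 < y → x + y < 1 →
      |f x + (1 - x) ^ α * f (y / (1 - x)) - f y - (1 - y) ^ α * f (x / (1 - y))| ≤ ε)
    {p q r : ℝ} (hp : 0 < p) (hq : 0 < q) (hr : 0 < r) (hs : p + q + r = 1) :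
    |Phi α f p q - Phi α f p r - Phi α f r q| ≤ 3 * ε := by
  have h0 := hf p q hp hq (by linarith)
  have h2 := hf p r hp hr (by linarith)
  have h1 := hf q r hq hr (by linarith)
  have e1 : (1:ℝ) - p = q + r := by linarith
  have e2 : (1:ℝ) - q = p + r := by linarith
  have e3 : (1:ℝ) - r = p + q := by linarith
  rw [e1, e2] at h0
  rw [e1, e3] at h2
  rw [e2, e3] at h1
  have hpq : (0:ℝ) < p + q := by linarith
  have hpr : (0:ℝ) < p + r := by linarith
  have hqr : (0:ℝ) < q + r := by linarith
  have key : Phi α f p q - Phi α f p r - Phi α f r q =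
      (f p + (q+r)^α * f (q/(q+r)) - f q - (p+r)^α * f (p/(p+r)))
      - (f p + (q+r)^α * f (r/(q+r)) - f r - (p+q)^α * f (p/(p+q)))
      + (f q + (p+r)^α * f (r/(p+r)) - f r - (p+q)^α * f (q/(p+q))) := by
    unfold Phi Psi
    have c1 : (1:ℝ) - p/(p+q) = q/(p+q) := by
      rw [eq_div_iff (ne_of_gt hpq), sub_mul, div_mul_cancel₀ _ (ne_of_gt hpq)]; ring
    have c2 : (1:ℝ) - p/(p+r) = r/(p+r) := by
      rw [eq_div_iff (ne_of_gt hpr), sub_mul, div_mul_cancel₀ _ (ne_of_gt hpr)]; ring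
    have c3 : (1:ℝ) - r/(r+q) = q/(r+q) := by
      have hrq : (0:ℝ) < r + q := by linarith
      rw [eq_div_iff (ne_of_gt hrq), sub_mul, div_mul_cancel₀ _ (ne_of_gt hrq)]; ring
    rw [c1, c2, c3]
    rw [show r + q = q + r from by ring]
    ring
  rw [key]
  have b0 := abs_le.mp h0
  have b1 := abs_le.mp h1
  have b2 := abs_le.mp h2
  apply abs_le.mpr
  constructor <;> [linarith [b0.1, b1.1, b2.2]; linarith [b0.2, b1.2, b2.1]]

lemma cocycle2 (α ε : ℝ) (f : ℝ → ℝ) (hα : 0 < α)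
    (hf : ∀ x y : ℝ, 0 < x → 0 < y → x + y < 1 →
      |f x + (1 - x) ^ α * f (y / (1 - x)) - f y - (1 - y) ^ α * f (x / (1 - y))| ≤ ε)
    {p q r : ℝ} (hp : 0 < p) (hq : 0 < q) (hr : 0 < r) :
    |Phi α f p q - Phi α f p r - Phi α f r q| ≤ 3 * ε * (p+q+r)^α := by
  set s := p + q + r with hsdef
  have hs : 0 < s := by positivity
  have hsne : s ≠ 0 := ne_of_gt hs
  have h := cocycle1 α ε f hf (p := p/s) (q := q/s) (r := r/s)
    (by positivity) (by positivity) (by positivity) (by field_simp; exact hsdef.symm)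
  have hhom : ∀ a b : ℝ, 0 < a → 0 < b →
      Phi α f a b = s^α * Phi α f (a/s) (b/s) := by
    intro a b ha hb
    have key := Phi_hom α f (l := s) (p := a/s) (q := b/s) hs (by positivity) (by positivity)
    rw [show s * (a/s) = a from by field_simp, show s * (b/s) = b from by field_simp] at key
    exact key
  rw [hhom p q hp hq, hhom p r hp hr, hhom r q hr hq]
  have hre : s^α * Phi α f (p/s) (q/s) - s^α * Phi α f (p/s) (r/s) - s^α * Phi α f (r/s) (q/s)
      = s^α * (Phi α f (p/s) (q/s) - Phi α f (p/s) (r/s) - Phi α f (r/s) (q/s)) := by ring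
  rw [hre, abs_mul, abs_of_nonneg (Real.rpow_nonneg hs.le α)]
  calc s^α * |Phi α f (p/s) (q/s) - Phi α f (p/s) (r/s) - Phi α f (r/s) (q/s)|
      ≤ s^α * (3*ε) := mul_le_mul_of_nonneg_left h (Real.rpow_nonneg hs.le α)
    _ = 3 * ε * s^α := by ring

lemma phi_mult (α ε : ℝ) (f : ℝ → ℝ) (hα : 0 < α) (hε : 0 ≤ ε)
    (hf : ∀ x y : ℝ, 0 < x → 0 < y → x + y < 1 →
      |f x + (1 - x) ^ α * f (y / (1 - x)) - f y - (1 - y) ^ α * f (x / (1 - y))| ≤ ε)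
    {u v : ℝ} (hu : 0 < u) (hu1 : u < 1) (hv : 0 < v) (hv1 : v < 1) :
    |phiF α f (u*v) - phiF α f u - u^α * phiF α f v| ≤ 3 * ε * 3^α := by
  have huv : 0 < u*v := mul_pos hu hv
  have h := cocycle2 α ε f hα hf (p := u*v) (q := u) (r := 1) huv hu one_pos
  have h1 : Phi α f (u*v) u = u^α * Phi α f v 1 := by
    have key := Phi_hom α f (l := u) (p := v) (q := 1) hu hv one_pos
    rw [mul_one] at key
    exact key
  have h2 : Phi α f 1 u = - Phi α f u 1 := Phi_antisymm α f hu one_pos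
  rw [h1, h2] at h
  have hpow : (u*v+u+1:ℝ)^α ≤ 3^α :=
    Real.rpow_le_rpow (by positivity) (by nlinarith) hα.le
  have h3 : 3*ε*(u*v+u+1:ℝ)^α ≤ 3*ε*3^α :=
    mul_le_mul_of_nonneg_left hpow (by linarith)
  unfold phiF
  have hb := abs_le.mp h
  apply abs_le.mpr
  constructor <;> [linarith [hb.2]; linarith [hb.1]]

lemma phi_approx (α ε : ℝ) (f : ℝ → ℝ) (hα : 0 < α) (hε : 0 ≤ ε)
    (hf : ∀ x y : ℝ, 0 < x → 0 < y → x + y < 1 →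
      |f x + (1 - x) ^ α * f (y / (1 - x)) - f y - (1 - y) ^ α * f (x / (1 - y))| ≤ ε)
    {u : ℝ} (hu : 0 < u) (hu1 : u < 1) :
    |phiF α f u - (phiF α f (1/2) / (1 - (1/2:ℝ)^α)) * (1 - u^α)|
      ≤ 6 * ε * 3^α / (1 - (1/2:ℝ)^α) := by
  have h1 := phi_mult α ε f hα hε hf (u := u) (v := 1/2) hu hu1 (by norm_num) (by norm_num)
  have h2 := phi_mult α ε f hα hε hf (u := 1/2) (v := u) (by norm_num) (by norm_num) hu hu1
  rw [show (1/2:ℝ)*u = u*(1/2) from by ring] at h2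
  have hB : (1/2:ℝ)^α < 1 := Real.rpow_lt_one (by norm_num) (by norm_num) hα
  have hBpos : 0 < 1 - (1/2:ℝ)^α := by linarith
  have hX : |(1 - (1/2:ℝ)^α) * phiF α f u - (1 - u^α) * phiF α f (1/2)| ≤ 6 * ε * 3^α := by
    have b1 := abs_le.mp h1
    have b2 := abs_le.mp h2
    apply abs_le.mpr
    constructor <;> [nlinarith [b1.2, b2.1]; nlinarith [b1.1, b2.2]]
  have idd : phiF α f u - (phiF α f (1/2) / (1 - (1/2:ℝ)^α)) * (1 - u^α)
      = ((1 - (1/2:ℝ)^α) * phiF α f u - (1 - u^α) * phiF α f (1/2)) / (1 - (1/2:ℝ)^α) := by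
    field_simp
  rw [idd, abs_div, abs_of_pos hBpos]
  gcongr

lemma psi_approx (α ε : ℝ) (f : ℝ → ℝ) (hα : 0 < α) (hε : 0 ≤ ε)
    (hf : ∀ x y : ℝ, 0 < x → 0 < y → x + y < 1 →
      |f x + (1 - x) ^ α * f (y / (1 - x)) - f y - (1 - y) ^ α * f (x / (1 - y))| ≤ ε)
    {x : ℝ} (hx : 0 < x) (hx1 : x < 1) :
    |Psi f x - (phiF α f (1/2) / (1 - (1/2:ℝ)^α)) * ((1-x)^α - x^α)|
      ≤ 3 * ε * 2^α + 12 * ε * 3^α / (1 - (1/2:ℝ)^α) := by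
  have h := cocycle2 α ε f hα hf (p := x) (q := 1-x) (r := 1) hx (by linarith) one_pos
  rw [show x + (1-x) + 1 = (2:ℝ) from by ring] at h
  have h1 : Phi α f x (1-x) = Psi f x := by
    unfold Phi
    rw [show x+(1-x) = (1:ℝ) from by ring, Real.one_rpow, div_one, one_mul]
  have h2 : Phi α f 1 (1-x) = - Phi α f (1-x) 1 := Phi_antisymm α f (by linarith) one_pos
  rw [h1, h2] at h
  have ha := phi_approx α ε f hα hε hf (u := x) hx hx1
  have hb := phi_approx α ε f hα hε hf (u := 1-x) (by linarith) (by linarith)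
  unfold phiF at ha hb
  obtain ⟨bh1, bh2⟩ := abs_le.mp h
  obtain ⟨ba1, ba2⟩ := abs_le.mp ha
  obtain ⟨bb1, bb2⟩ := abs_le.mp hb
  have hc : phiF α f (1/2) / (1 - (1/2:ℝ)^α) * ((1-x)^α - x^α)
      = (Phi α f (1/2) 1)/(1 - (1/2:ℝ)^α) * (1 - x^α)
        - (Phi α f (1/2) 1)/(1 - (1/2:ℝ)^α) * (1 - (1-x)^α) := by
    unfold phiF; ring
  rw [hc]
  apply abs_le.mpr
  constructor
  · ring_nf at bh1 ba1 bb2 ⊢; linarith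
  · ring_nf at bh2 ba2 bb1 ⊢; linarith

lemma hE_bound (α ε c Cp : ℝ) (f : ℝ → ℝ) (hα : 0 < α) (hε : 0 ≤ ε) (hCp : 0 ≤ Cp)
    (hf : ∀ x y : ℝ, 0 < x → 0 < y → x + y < 1 →
      |f x + (1 - x) ^ α * f (y / (1 - x)) - f y - (1 - y) ^ α * f (x / (1 - y))| ≤ ε)
    (hpsi : ∀ t : ℝ, 0 < t → t < 1 → |Psi f t - c * ((1-t)^α - t^α)| ≤ Cp * ε) :
    ∀ x y : ℝ, 0 < x → 0 < y → x + y < 1 →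
      |(f x + f (1-x) + c) + (1-x)^α * (f (y/(1-x)) + f (1 - y/(1-x)) + c)
        - (f y + f (1-y) + c) - (1-y)^α * (f (x/(1-y)) + f (1 - x/(1-y)) + c)|
      ≤ (3 + 3*Cp) * ε := by
  intro x y hx hy hxy
  have hx1 : x < 1 := by linarith
  have hy1 : y < 1 := by linarith
  have h1x : (0:ℝ) < 1 - x := by linarith
  have h1y : (0:ℝ) < 1 - y := by linarith
  have hr : (0:ℝ) < 1 - x - y := by linarith
  have hxyp : (0:ℝ) < x + y := by linarith
  have h0 := hf x y hx hy hxy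
  have h2 := hf x (1-x-y) hx hr (by linarith)
  have h1 := hf y (1-x-y) hy hr (by linarith)
  rw [show (1:ℝ) - (1-x-y) = x+y from by ring] at h1 h2
  have ex := hpsi x hx hx1
  have ey := hpsi y hy hy1
  have exy := hpsi (x/(x+y)) (by positivity) ((div_lt_one hxyp).mpr (by linarith))
  have w1 : 1 - y/(1-x) = (1-x-y)/(1-x) := by field_simp <;> ring
  have w2 : 1 - x/(1-y) = (1-x-y)/(1-y) := by field_simp <;> ring
  have w3 : 1 - x/(x+y) = y/(x+y) := by field_simp <;> ring
  unfold Psi at ex ey exy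
  rw [w3] at exy
  have hA : (x+y)^α * (y/(x+y))^α = y^α := by
    rw [← Real.mul_rpow hxyp.le (by positivity)]
    congr 1
    field_simp
  have hB : (x+y)^α * (x/(x+y))^α = x^α := by
    rw [← Real.mul_rpow hxyp.le (by positivity)]
    congr 1
    field_simp
  rw [w1, w2]
  set pw : ℝ := (x+y)^α with hpw
  have hpwnn : 0 ≤ pw := Real.rpow_nonneg hxyp.le α
  have hpow1 : pw ≤ 1 := Real.rpow_le_one hxyp.le (by linarith) hα.le
  set E0 : ℝ := f x + (1 - x) ^ α * f (y / (1 - x)) - f y - (1 - y) ^ α * f (x / (1 - y)) with hE0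
  set E2 : ℝ := f x + (1 - x) ^ α * f ((1-x-y) / (1 - x)) - f (1-x-y) - pw * f (x / (x+y)) with hE2
  set E1 : ℝ := f y + (1 - y) ^ α * f ((1-x-y) / (1 - y)) - f (1-x-y) - pw * f (y / (x+y)) with hE1
  set eX : ℝ := f x - f (1-x) - c * ((1-x)^α - x^α) with heX
  set eY : ℝ := f y - f (1-y) - c * ((1-y)^α - y^α) with heY
  set eXY : ℝ := f (x/(x+y)) - f (y/(x+y)) - c * ((y/(x+y))^α - (x/(x+y))^α) with heXY
  have goal_eq : (f x + f (1-x) + c) + (1-x)^α * (f (y/(1-x)) + f ((1-x-y)/(1-x)) + c)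
      - (f y + f (1-y) + c) - (1-y)^α * (f (x/(1-y)) + f ((1-x-y)/(1-y)) + c)
      = E0 + (E2 - E1) + (eY - eX) + pw * eXY := by
    simp only [hE0, hE2, hE1, heX, heY, heXY, hpw]
    linear_combination c * hA - c * hB
  rw [goal_eq]
  have hP : |pw * eXY| ≤ Cp * ε := by
    rw [abs_mul, abs_of_nonneg hpwnn]
    calc pw * |eXY| ≤ 1 * (Cp * ε) :=
          mul_le_mul hpow1 exy (abs_nonneg _) one_pos.le
      _ = Cp * ε := one_mul _
  obtain ⟨p1, p2⟩ := abs_le.mp hP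
  obtain ⟨a1, a2⟩ := abs_le.mp h0
  obtain ⟨b1, b2⟩ := abs_le.mp h1
  obtain ⟨c1, c2⟩ := abs_le.mp h2
  obtain ⟨d1, d2⟩ := abs_le.mp ex
  obtain ⟨g1, g2⟩ := abs_le.mp ey
  apply abs_le.mpr
  constructor <;> [linarith; linarith]

lemma sym_bound (α δ : ℝ) (h : ℝ → ℝ) (hα : 0 < α) (hα1 : α ≠ 1) (hδ : 0 ≤ δ)
    (hsym : ∀ t : ℝ, h (1-t) = h t)
    (hE : ∀ x y : ℝ, 0 < x → 0 < y → x + y < 1 →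
      |h x + (1-x)^α * h (y/(1-x)) - h y - (1-y)^α * h (x/(1-y))| ≤ δ) :
    ∀ t : ℝ, 0 < t → t < 1 →
      |h t - (h (1/2) / ((2:ℝ)^(1-α) - 1)) * (t^α + (1-t)^α - 1)|
        ≤ 3 * δ / |(2:ℝ)^(1-α) - 1| := by
  intro t ht ht1
  have h2t : (0:ℝ) < 2 - t := by linarith
  have h1t : (0:ℝ) < 1 - t := by linarith
  -- A1 : hE (1-t) (t/2)
  have A1 := hE (1-t) (t/2) (by linarith) (by linarith) (by linarith)
  rw [show (1:ℝ) - (1-t) = t from by ring] at A1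
  rw [show t/2/t = 1/2 from by rw [div_div, mul_comm 2 t, ← div_div, div_self (ne_of_gt ht)]] at A1
  rw [hsym t] at A1
  rw [show (1:ℝ) - t/2 = (2-t)/2 from by ring] at A1
  rw [show (1-t)/((2-t)/2) = 2*(1-t)/(2-t) from by rw [div_div_eq_mul_div]; ring] at A1
  rw [show 2*(1-t)/(2-t) = 1 - t/(2-t) from by field_simp <;> ring] at A1
  rw [hsym (t/(2-t))] at A1
  -- A2 : hE (1/2) (t/2)
  have A2 := hE (1/2) (t/2) (by norm_num) (by linarith) (by linarith)
  rw [show (1:ℝ) - 1/2 = 1/2 from by norm_num] at A2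
  rw [show t/2/(1/2:ℝ) = t from by ring] at A2
  rw [show (1:ℝ) - t/2 = (2-t)/2 from by ring] at A2
  rw [show (1/2:ℝ)/((2-t)/2) = 1/(2-t) from by rw [div_div_eq_mul_div]; ring] at A2
  rw [show (1:ℝ)/(2-t) = 1 - (1-t)/(2-t) from by field_simp <;> ring] at A2
  rw [hsym ((1-t)/(2-t))] at A2
  -- A3 : hE (t/(2-t)) ((1-t)/(2-t))
  have hsum : t/(2-t) + (1-t)/(2-t) < 1 := by
    rw [← add_div, div_lt_one h2t]; linarith
  have A3 := hE (t/(2-t)) ((1-t)/(2-t)) (by positivity) (by positivity) hsum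
  rw [show (1:ℝ) - t/(2-t) = (2-2*t)/(2-t) from by field_simp <;> ring] at A3
  have hne1 : (2:ℝ) - t ≠ 0 := ne_of_gt h2t
  have hne2 : (2:ℝ) - 2*t ≠ 0 := ne_of_gt (by linarith)
  rw [show (1-t)/(2-t)/((2-2*t)/(2-t)) = 1/2 from by
    field_simp] at A3
  rw [show (1:ℝ) - (1-t)/(2-t) = 1/(2-t) from by field_simp <;> ring] at A3
  rw [show t/(2-t)/(1/(2-t)) = t from by
    field_simp] at A3
  -- products
  have P1 : ((2-t)/2)^α * ((2-2*t)/(2-t))^α = (1-t)^α := by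
    rw [← Real.mul_rpow (by positivity) (div_nonneg (by linarith) (by linarith))]
    congr 1
    field_simp
  have P2 : ((2-t)/2)^α * ((1:ℝ)/(2-t))^α = (1/2:ℝ)^α := by
    rw [← Real.mul_rpow (by positivity) (by positivity)]
    congr 1
    field_simp
  have hwnn : 0 ≤ ((2-t)/2:ℝ)^α := Real.rpow_nonneg (by positivity) α
  have hw1 : ((2-t)/2:ℝ)^α ≤ 1 := Real.rpow_le_one (by positivity) (by linarith) hα.le
  set w : ℝ := ((2-t)/2:ℝ)^α with hw
  set a1 : ℝ := h t + t^α * h (1/2) - h (t/2) - w * h (t/(2-t)) with ha1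
  set a2 : ℝ := h (1/2) + (1/2:ℝ)^α * h t - h (t/2) - w * h ((1-t)/(2-t)) with ha2
  set a3 : ℝ := h (t/(2-t)) + ((2-2*t)/(2-t))^α * h (1/2) - h ((1-t)/(2-t)) - ((1:ℝ)/(2-t))^α * h t with ha3
  have key : (1 - 2*(1/2:ℝ)^α) * h t + (t^α + (1-t)^α - 1) * h (1/2)
      = a1 - a2 + w * a3 := by
    simp only [ha1, ha2, ha3, hw]
    linear_combination h t * P2 - h (1/2) * P1
  have hwa3 : |w * a3| ≤ δ := by
    rw [abs_mul, abs_of_nonneg hwnn]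
    calc w * |a3| ≤ 1 * δ := mul_le_mul hw1 A3 (abs_nonneg _) one_pos.le
      _ = δ := one_mul _
  have hX : |(1 - 2*(1/2:ℝ)^α) * h t + (t^α + (1-t)^α - 1) * h (1/2)| ≤ 3 * δ := by
    rw [key]
    obtain ⟨u1, u2⟩ := abs_le.mp A1
    obtain ⟨v1, v2⟩ := abs_le.mp A2
    obtain ⟨z1, z2⟩ := abs_le.mp hwa3
    apply abs_le.mpr
    constructor <;> linarith
  -- convert 2*(1/2)^α to 2^(1-α)
  have htwo : 2*(1/2:ℝ)^α = (2:ℝ)^(1-α) := by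
    rw [Real.rpow_sub (by norm_num : (0:ℝ) < 2), Real.rpow_one]
    rw [show (1/2:ℝ) = 2⁻¹ from by norm_num, Real.inv_rpow (by norm_num : (0:ℝ) ≤ 2)]
    field_simp
  rw [htwo] at hX
  have hne : (2:ℝ)^(1-α) ≠ 1 := by
    rcases lt_or_gt_of_ne hα1 with hlt | hgt
    · have : (1:ℝ) < (2:ℝ)^(1-α) := by
        have := Real.one_lt_rpow_iff_of_pos (by norm_num : (0:ℝ) < 2) (y := 1-α)
        exact this.mpr (Or.inl ⟨by norm_num, by linarith⟩)
      exact ne_of_gt this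
    · have : (2:ℝ)^(1-α) < 1 :=
        Real.rpow_lt_one_of_one_lt_of_neg (by norm_num) (by linarith)
      exact ne_of_lt this
  have hD : (2:ℝ)^(1-α) - 1 ≠ 0 := sub_ne_zero.mpr hne
  have hDabs : 0 < |(2:ℝ)^(1-α) - 1| := abs_pos.mpr hD
  have idd : h t - (h (1/2) / ((2:ℝ)^(1-α) - 1)) * (t^α + (1-t)^α - 1)
      = -((1 - (2:ℝ)^(1-α)) * h t + (t^α + (1-t)^α - 1) * h (1/2)) / ((2:ℝ)^(1-α) - 1) := by
    field_simp
    ring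
  rw [idd, abs_div, abs_neg]
  gcongr

set_option maxHeartbeats 1000000 in
theorem stmt_13 (α ε : ℝ) (hα : 0 < α) (hα1 : α ≠ 1) (hε : 0 ≤ ε) (f : ℝ → ℝ)
    (hf : ∀ x y : ℝ, 0 < x → 0 < y → x + y < 1 →
      |f x + (1 - x) ^ α * f (y / (1 - x)) - f y - (1 - y) ^ α * f (x / (1 - y))| ≤ ε) :
    ∃ a b : ℝ, ∀ x : ℝ, x ∈ Set.Ioo (0 : ℝ) 1 →
      |f x - (a * x ^ α + b * (1 - x) ^ α - b)| ≤
        |(2 : ℝ) ^ (1 - α) - 1|⁻¹ *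
          (3 + 12 * 2 ^ α + 32 * 3 ^ (α + 1) / |(2 : ℝ) ^ (-α) - 1|) * ε := by
  have hhalf : (1/2:ℝ)^α < 1 := Real.rpow_lt_one (by norm_num) (by norm_num) hα
  have hhalfpos : (0:ℝ) < (1/2:ℝ)^α := Real.rpow_pos_of_pos (by norm_num) α
  have hB1pos : (0:ℝ) < 1 - (1/2:ℝ)^α := by linarith
  have hB1le1 : (1:ℝ) - (1/2:ℝ)^α ≤ 1 := by linarith
  -- the constant c
  set c : ℝ := phiF α f (1/2) / (1 - (1/2:ℝ)^α) with hcdef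
  set Cp : ℝ := 3*(2:ℝ)^α + 12*(3:ℝ)^α/(1 - (1/2:ℝ)^α) with hCpdef
  have hA2 : (1:ℝ) ≤ (2:ℝ)^α := by
    calc (1:ℝ) = 1^α := (Real.one_rpow α).symm
      _ ≤ 2^α := Real.rpow_le_rpow zero_le_one one_le_two hα.le
  have hA23 : (2:ℝ)^α ≤ (3:ℝ)^α := Real.rpow_le_rpow (by norm_num) (by norm_num) hα.le
  have hCp : 0 ≤ Cp := by
    rw [hCpdef]
    have h1 : (0:ℝ) ≤ 12*(3:ℝ)^α/(1 - (1/2:ℝ)^α) :=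
      div_nonneg (by positivity) hB1pos.le
    nlinarith [hA2]
  have hpsi : ∀ t : ℝ, 0 < t → t < 1 → |Psi f t - c * ((1-t)^α - t^α)| ≤ Cp * ε := by
    intro t h1 h2
    have h := psi_approx α ε f hα hε hf h1 h2
    calc |Psi f t - c * ((1-t)^α - t^α)|
        = |Psi f t - phiF α f (1/2) / (1 - (1/2:ℝ)^α) * ((1-t)^α - t^α)| := by rw [hcdef]
      _ ≤ 3 * ε * 2^α + 12 * ε * 3^α / (1 - (1/2:ℝ)^α) := h
      _ = Cp * ε := by rw [hCpdef]; ring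
  have hEh := hE_bound α ε c Cp f hα hε hCp hf hpsi
  have hδ : 0 ≤ (3 + 3*Cp) * ε := mul_nonneg (by linarith) hε
  have hsym : ∀ t : ℝ, (fun s : ℝ => f s + f (1-s) + c) (1-t) = (fun s : ℝ => f s + f (1-s) + c) t := by
    intro t
    simp only
    rw [show (1:ℝ)-(1-t) = t from by ring]
    ring
  have hE' : ∀ x y : ℝ, 0 < x → 0 < y → x + y < 1 →
      |(fun s : ℝ => f s + f (1-s) + c) x + (1-x)^α * (fun s : ℝ => f s + f (1-s) + c) (y/(1-x))
        - (fun s : ℝ => f s + f (1-s) + c) y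
        - (1-y)^α * (fun s : ℝ => f s + f (1-s) + c) (x/(1-y))| ≤ (3 + 3*Cp) * ε := by
    intro x y hx hy hxy
    exact hEh x y hx hy hxy
  have hhb := sym_bound α ((3 + 3*Cp)*ε) (fun s : ℝ => f s + f (1-s) + c) hα hα1 hδ hsym hE'
  set c2 : ℝ := (f (1/2) + f (1 - 1/2) + c) / ((2:ℝ)^(1-α) - 1) with hc2def
  refine ⟨(c2 - c)/2, (c2 + c)/2, ?_⟩
  intro x hx
  obtain ⟨hx0, hx1⟩ := hx
  have e1 := hpsi x hx0 hx1
  have e2 := hhb x hx0 hx1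
  unfold Psi at e1
  -- key algebraic identity
  have key : f x - ((c2 - c)/2 * x^α + (c2 + c)/2 * (1-x)^α - (c2 + c)/2)
      = (f x - f (1-x) - c * ((1-x)^α - x^α))/2
        + ((f x + f (1-x) + c) - c2 * (x^α + (1-x)^α - 1))/2 := by
    ring
  rw [key]
  -- bound the two halves
  have babs := abs_add_le ((f x - f (1-x) - c * ((1-x)^α - x^α))/2)
    (((f x + f (1-x) + c) - c2 * (x^α + (1-x)^α - 1))/2)
  rw [abs_div, abs_div, abs_two] at babs
  set B2 : ℝ := |(2:ℝ)^(1-α) - 1| with hB2def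
  have hB2pos : 0 < B2 := by
    rw [hB2def]
    apply abs_pos.mpr
    apply sub_ne_zero.mpr
    rcases lt_or_gt_of_ne hα1 with hlt | hgt
    · have : (1:ℝ) < (2:ℝ)^(1-α) := by
        have := Real.one_lt_rpow_iff_of_pos (by norm_num : (0:ℝ) < 2) (y := 1-α)
        exact this.mpr (Or.inl ⟨by norm_num, by linarith⟩)
      exact ne_of_gt this
    · exact ne_of_lt (Real.rpow_lt_one_of_one_lt_of_neg (by norm_num) (by linarith))
  have hB2le1 : B2 ≤ 1 := by
    rw [hB2def]
    apply abs_le.mpr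
    constructor
    · have : (0:ℝ) < (2:ℝ)^(1-α) := Real.rpow_pos_of_pos (by norm_num) _
      linarith
    · have : (2:ℝ)^(1-α) ≤ (2:ℝ)^(1:ℝ) :=
        Real.rpow_le_rpow_left_iff (by norm_num : (1:ℝ) < 2) |>.mpr (by linarith)
      rw [Real.rpow_one] at this
      linarith
  have h3a : (3:ℝ)^(α+1) = (3:ℝ)^α * 3 := by
    rw [Real.rpow_add (by norm_num : (0:ℝ) < 3), Real.rpow_one]
  have hinv : (2:ℝ)^(-α) = (1/2:ℝ)^α := by
    rw [Real.rpow_neg (by norm_num : (0:ℝ) ≤ 2),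
      show (1/2:ℝ) = 2⁻¹ from by norm_num, Real.inv_rpow (by norm_num : (0:ℝ) ≤ 2)]
  have habs1 : |(2:ℝ)^(-α) - 1| = 1 - (1/2:ℝ)^α := by
    rw [hinv, abs_of_nonpos (by linarith : (1/2:ℝ)^α - 1 ≤ 0)]
    ring
  rw [habs1, h3a]
  have hQ12 : 12*(2:ℝ)^α ≤ 12*(3:ℝ)^α/(1 - (1/2:ℝ)^α) := by
    rw [le_div_iff₀ hB1pos]
    nlinarith [hA23, hA2, hhalfpos,
      mul_nonneg (le_trans zero_le_one hA2) hhalfpos.le]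
  set A2v : ℝ := (2:ℝ)^α with hA2vdef
  set A3v : ℝ := (3:ℝ)^α with hA3vdef
  set Hv : ℝ := (1/2:ℝ)^α with hHvdef
  set P1v : ℝ := x^α with hP1vdef
  set P2v : ℝ := (1-x)^α with hP2vdef
  clear_value A2v A3v Hv P1v P2v
  clear hcdef
  clear_value c Cp c2 B2
  have step1 : |f x - f (1-x) - c * (P2v - P1v)|/2
        + |(f x + f (1-x) + c) - c2 * (P1v + P2v - 1)|/2
      ≤ Cp*ε/2 + (3*((3 + 3*Cp)*ε)/B2)/2 := by
    have d1 : |f x - f (1-x) - c * (P2v - P1v)|/2 ≤ Cp*ε/2 := by linarith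
    have d2 : |(f x + f (1-x) + c) - c2 * (P1v + P2v - 1)|/2
        ≤ (3*((3 + 3*Cp)*ε)/B2)/2 := by linarith
    linarith
  set Qv : ℝ := 12*A3v/(1-Hv) with hQvdef
  rw [show 32*(A3v*3)/(1-Hv) = 8*Qv from by rw [hQvdef]; ring]
  have hCp2 : Cp = 3*A2v + Qv := hCpdef
  clear_value Qv
  have hQnn : 0 ≤ Qv := le_trans (by linarith) hQ12
  have hfact : (3*A2v + Qv)*B2 ≤ 3*A2v + Qv := by
    nlinarith [mul_nonneg (show (0:ℝ) ≤ 3*A2v + Qv by linarith)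
      (show (0:ℝ) ≤ 1 - B2 by linarith)]
  have hnum : 0 ≤ (6 + 24*A2v + 16*Qv) - Cp*B2 - 9 - 9*Cp := by
    rw [hCp2]
    linarith [hfact, hQ12, hA2]
  have hid : B2⁻¹*(3 + 12*A2v + 8*Qv) - (Cp/2 + 3*(3+3*Cp)/B2/2)
      = ((6 + 24*A2v + 16*Qv) - Cp*B2 - 9 - 9*Cp)/(2*B2) := by
    rw [hCp2]
    field_simp
    ring
  have hsc : Cp/2 + 3*(3+3*Cp)/B2/2 ≤ B2⁻¹*(3 + 12*A2v + 8*Qv) := by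
    have hd := div_nonneg hnum (by positivity : (0:ℝ) ≤ 2*B2)
    linarith [hid, hd]
  calc |(f x - f (1-x) - c * (P2v - P1v))/2 + (f x + f (1-x) + c - c2 * (P1v + P2v - 1))/2|
      ≤ Cp*ε/2 + (3*((3 + 3*Cp)*ε)/B2)/2 := le_trans babs (by linarith [step1])
    _ = (Cp/2 + 3*(3+3*Cp)/B2/2)*ε := by ring
    _ ≤ (B2⁻¹*(3 + 12*A2v + 8*Qv))*ε := mul_le_mul_of_nonneg_right hsc hε
    _ = B2⁻¹*(3 + 12*A2v + 8*Qv)*ε := by ring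
end

section
/- Let α ≠ 1 be a fixed real. A function f : (0,1) → ℝ satisfies f(x) + (1-x)^α f(y/(1-x)) = f(y) + (1-y)^α f(x/(1-y)) for all (x,y) with x, y, x+y ∈ (0,1) if and only if: (in case α = 0) there exist a logarithmic function l : (0,1) → ℝ and c ∈ ℝ with f(x) = l(1-x) + c for all x ∈ (0,1); (in case α ∉ {0,1}) there exist a, b ∈ ℝ with f(x) = a x^α + b(1-x)^α - b for all x ∈ (0,1). -/
open Real

private noncomputable def phi15 (α : ℝ) (f : ℝ → ℝ) (u v : ℝ) : ℝ :=
  (u + v) ^ α * (f (u / (u + v)) - f (v / (u + v)))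

private noncomputable def gee15 (α : ℝ) (f : ℝ → ℝ) (u : ℝ) : ℝ := phi15 α f u 1

private def FE15 (α : ℝ) (f : ℝ → ℝ) : Prop :=
  ∀ x y : ℝ, 0 < x → 0 < y → x + y < 1 →
    f x + (1 - x) ^ α * f (y / (1 - x)) = f y + (1 - y) ^ α * f (x / (1 - y))

section
variable {α : ℝ} {f : ℝ → ℝ}

private lemma F1 (hf : FE15 α f) (x y : ℝ) (hx : 0 < x) (hy : 0 < y) (hxy : x + y < 1) :
    phi15 α f x (1 - x - y) = phi15 α f y (1 - x - y) + phi15 α f x y := by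
  have A := hf x y hx hy hxy
  have B := hf x (1 - x - y) hx (by linarith) (by linarith)
  have C := hf y (1 - x - y) hy (by linarith) (by linarith)
  rw [show (1:ℝ) - (1 - x - y) = x + y from by ring] at B C
  unfold phi15
  rw [show x + (1 - x - y) = 1 - y from by ring, show y + (1 - x - y) = 1 - x from by ring]
  linear_combination B - A - C

private lemma F2 (l u v : ℝ) (hl : 0 < l) (hu : 0 < u) (hv : 0 < v) :
    phi15 α f (l * u) (l * v) = l ^ α * phi15 α f u v := by
  unfold phi15
  rw [show l * u + l * v = l * (u + v) from by ring,
    Real.mul_rpow hl.le (by positivity),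
    show l * u / (l * (u + v)) = u / (u + v) from by
      rw [mul_div_mul_left _ _ hl.ne'],
    show l * v / (l * (u + v)) = v / (u + v) from by
      rw [mul_div_mul_left _ _ hl.ne']]
  ring

private lemma F3 (hf : FE15 α f) (x y z : ℝ) (hx : 0 < x) (hy : 0 < y) (hz : 0 < z) :
    phi15 α f x z = phi15 α f y z + phi15 α f x y := by
  set s : ℝ := x + y + z with hs
  have hspos : 0 < s := by positivity
  have h1 := F1 hf (x / s) (y / s) (div_pos hx hspos) (div_pos hy hspos)
    (by rw [← add_div, div_lt_one hspos]; linarith)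
  rw [show (1:ℝ) - x / s - y / s = z / s from by field_simp; ring] at h1
  have e1 := F2 (f := f) (α := α) s (x / s) (z / s) hspos (div_pos hx hspos) (div_pos hz hspos)
  have e2 := F2 (f := f) (α := α) s (y / s) (z / s) hspos (div_pos hy hspos) (div_pos hz hspos)
  have e3 := F2 (f := f) (α := α) s (x / s) (y / s) hspos (div_pos hx hspos) (div_pos hy hspos)
  have sx : s * (x / s) = x := by field_simp
  have sy : s * (y / s) = y := by field_simp
  have sz : s * (z / s) = z := by field_simp
  rw [sx, sz] at e1
  rw [sy, sz] at e2
  rw [sx, sy] at e3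
  rw [e1, e2, e3, h1]
  ring

private lemma F4 (u v : ℝ) : phi15 α f v u = - phi15 α f u v := by
  unfold phi15
  rw [show v + u = u + v from by ring]
  ring

private lemma F6 (hf : FE15 α f) (u v : ℝ) (hu : 0 < u) (hv : 0 < v) :
    phi15 α f u v = gee15 α f u - gee15 α f v := by
  have h1 := F3 hf u 1 v hu one_pos hv
  have h2 := F4 (α := α) (f := f) 1 v
  unfold gee15
  linarith

private lemma F7 (hf : FE15 α f) (l u : ℝ) (hl : 0 < l) (hu : 0 < u) :
    gee15 α f (l * u) = gee15 α f l + l ^ α * gee15 α f u := by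
  have a1 := F6 hf (l * u) l (by positivity) hl
  have a2 := F2 (f := f) (α := α) l u 1 hl hu one_pos
  rw [mul_one] at a2
  unfold gee15 at *
  linarith

private lemma F8 (hf : FE15 α f) (t : ℝ) (ht : 0 < t) (ht1 : t < 1) :
    f t - f (1 - t) = gee15 α f t - gee15 α f (1 - t) := by
  have h1 := F6 hf t (1 - t) ht (by linarith)
  unfold phi15 at h1
  rw [show t + (1 - t) = (1:ℝ) from by ring, Real.one_rpow, div_one, div_one, one_mul] at h1
  exact h1

end

private lemma S1 {α : ℝ} {F : ℝ → ℝ} (hf : FE15 α F)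
    (hsym : ∀ t : ℝ, 0 < t → t < 1 → F t = F (1 - t))
    (x y : ℝ) (hx : 0 < x) (hy : 0 < y) (hxy : x + y < 1) :
    F x + (1 - x) ^ α * F (y / (1 - x)) = F (x + y) + (x + y) ^ α * F (x / (x + y)) := by
  have hx1 : (0:ℝ) < 1 - x := by linarith
  have h1 : F (y / (1 - x)) = F ((1 - x - y) / (1 - x)) := by
    have := hsym (y / (1 - x)) (div_pos hy hx1) ((div_lt_one hx1).2 (by linarith))
    rw [this, show 1 - y / (1 - x) = (1 - x - y) / (1 - x) from by field_simp]
  have h2 := hf x (1 - x - y) hx (by linarith) (by linarith)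
  rw [show (1:ℝ) - (1 - x - y) = x + y from by ring] at h2
  have h3 : F (1 - x - y) = F (x + y) := by
    have := hsym (1 - x - y) (by linarith) (by linarith)
    rw [this, show (1:ℝ) - (1 - x - y) = x + y from by ring]
  rw [h1, h2, h3]

private lemma keyC {α : ℝ} {F : ℝ → ℝ} (hf : FE15 α F)
    (hsym : ∀ t : ℝ, 0 < t → t < 1 → F t = F (1 - t))
    (p q : ℝ) (hp0 : 0 < p) (hp1 : p < 1) (hq0 : 0 < q) (hq1 : q < 1) :
    F p * (1 - q ^ α - (1 - q) ^ α) = F q * (1 - p ^ α - (1 - p) ^ α) := by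
  have hp1' : (0:ℝ) < 1 - p := by linarith
  have hq1' : (0:ℝ) < 1 - q := by linarith
  have hxp : 0 < p * q := by positivity
  have hyp : 0 < p * (1 - q) := by positivity
  have hzp : 0 < (1 - p) * q := by positivity
  have hx1 : (0:ℝ) < 1 - p * q := by nlinarith
  -- E1
  have E1 := S1 hf hsym (p * q) (p * (1 - q)) hxp hyp (by nlinarith)
  rw [show p * q + p * (1 - q) = p from by ring] at E1
  rw [show p * q / p = q from by
        rw [mul_comm p q, mul_div_assoc, div_self hp0.ne', mul_one]] at E1
  -- E2
  have E2 := S1 hf hsym (p * q) ((1 - p) * q) hxp hzp (by nlinarith)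
  rw [show p * q + (1 - p) * q = q from by ring] at E2
  rw [show p * q / q = p from by rw [mul_div_assoc, div_self hq0.ne', mul_one]] at E2
  -- E3 : bridge
  have hX : 0 < p * (1 - q) / (1 - p * q) := div_pos hyp hx1
  have hY : 0 < (1 - p) * q / (1 - p * q) := div_pos hzp hx1
  have hXY : p * (1 - q) / (1 - p * q) + (1 - p) * q / (1 - p * q) < 1 := by
    rw [← add_div, div_lt_one hx1]
    nlinarith [mul_pos hp1' hq1']
  have m := hf (p * (1 - q) / (1 - p * q)) ((1 - p) * q / (1 - p * q)) hX hY hXY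
  rw [show 1 - p * (1 - q) / (1 - p * q) = (1 - p) / (1 - p * q) from by
        field_simp; ring] at m
  rw [show 1 - (1 - p) * q / (1 - p * q) = (1 - q) / (1 - p * q) from by
        field_simp; ring] at m
  rw [show (1 - p) * q / (1 - p * q) / ((1 - p) / (1 - p * q)) = q from by
        rw [div_div_div_cancel_right₀ hx1.ne' _ _, mul_comm, mul_div_assoc, div_self hp1'.ne', mul_one]] at m
  rw [show p * (1 - q) / (1 - p * q) / ((1 - q) / (1 - p * q)) = p from by
        rw [div_div_div_cancel_right₀ hx1.ne' _ _, mul_div_assoc, div_self hq1'.ne', mul_one]] at m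
  have k1 : (1 - p * q) ^ α * ((1 - p) / (1 - p * q)) ^ α = (1 - p) ^ α := by
    rw [← Real.mul_rpow hx1.le (by positivity)]
    congr 1
    field_simp
  have k2 : (1 - p * q) ^ α * ((1 - q) / (1 - p * q)) ^ α = (1 - q) ^ α := by
    rw [← Real.mul_rpow hx1.le (by positivity)]
    congr 1
    field_simp
  have E3 : (1 - p * q) ^ α * F (p * (1 - q) / (1 - p * q)) + (1 - p) ^ α * F q
      = (1 - p * q) ^ α * F ((1 - p) * q / (1 - p * q)) + (1 - q) ^ α * F p := by
    linear_combination ((1 - p * q) ^ α) * m - F q * k1 + F p * k2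
  linear_combination E2 + E3 - E1


theorem stmt_15 (α : ℝ) (hα : α ≠ 1) (f : ℝ → ℝ) :
    (∀ x y : ℝ, 0 < x → 0 < y → x + y < 1 →
      f x + (1 - x) ^ α * f (y / (1 - x)) = f y + (1 - y) ^ α * f (x / (1 - y))) ↔
    ((α = 0 ∧ ∃ (l : ℝ → ℝ) (c : ℝ),
        (∀ x y : ℝ, x ∈ Set.Ioo (0 : ℝ) 1 → y ∈ Set.Ioo (0 : ℝ) 1 →
          x * y ∈ Set.Ioo (0 : ℝ) 1 → l (x * y) = l x + l y) ∧
        ∀ x : ℝ, x ∈ Set.Ioo (0 : ℝ) 1 → f x = l (1 - x) + c) ∨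
     (α ≠ 0 ∧ ∃ a b : ℝ, ∀ x : ℝ, x ∈ Set.Ioo (0 : ℝ) 1 →
        f x = a * x ^ α + b * (1 - x) ^ α - b)) := by
  constructor
  · intro hf
    have hfFE : FE15 α f := hf
    by_cases h0 : α = 0
    · -- logarithmic case
      subst h0
      left
      have hg : ∀ l u : ℝ, 0 < l → 0 < u →
          gee15 0 f (l * u) = gee15 0 f l + gee15 0 f u := by
        intro l u hl hu
        have := F7 hfFE l u hl hu
        simpa using this
      have hfF : FE15 0 (fun x => f x + gee15 0 f (1 - x)) := by
        intro x y hx hy hxy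
        simp only [Real.rpow_zero, one_mul]
        have A := hf x y hx hy hxy
        simp only [Real.rpow_zero, one_mul] at A
        have hx1 : (0:ℝ) < 1 - x := by linarith
        have hy1 : (0:ℝ) < 1 - y := by linarith
        have hs : (0:ℝ) < 1 - x - y := by linarith
        have g1 : gee15 0 f (1 - x) + gee15 0 f ((1 - x - y) / (1 - x)) = gee15 0 f (1 - x - y) := by
          have := hg (1 - x) ((1 - x - y) / (1 - x)) hx1 (div_pos hs hx1)
          rw [show (1 - x) * ((1 - x - y) / (1 - x)) = 1 - x - y from by field_simp] at this
          linarith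
        have g2 : gee15 0 f (1 - y) + gee15 0 f ((1 - x - y) / (1 - y)) = gee15 0 f (1 - x - y) := by
          have := hg (1 - y) ((1 - x - y) / (1 - y)) hy1 (div_pos hs hy1)
          rw [show (1 - y) * ((1 - x - y) / (1 - y)) = 1 - x - y from by field_simp] at this
          linarith
        rw [show 1 - y / (1 - x) = (1 - x - y) / (1 - x) from by first | (field_simp; ring) | field_simp,
          show 1 - x / (1 - y) = (1 - x - y) / (1 - y) from by first | (field_simp; ring) | field_simp]
        linarith
      have hsymF : ∀ t : ℝ, 0 < t → t < 1 →
          (fun x => f x + gee15 0 f (1 - x)) t = (fun x => f x + gee15 0 f (1 - x)) (1 - t) := by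
        intro t ht ht1
        simp only
        rw [show (1:ℝ) - (1 - t) = t from by ring]
        have := F8 hfFE t ht ht1
        linarith
      have hconst : ∀ p : ℝ, 0 < p → p < 1 →
          f p + gee15 0 f (1 - p) = f 2⁻¹ + gee15 0 f (1 - 2⁻¹) := by
        intro p hp hp1
        have := keyC hfF hsymF p 2⁻¹ hp hp1 (by norm_num) (by norm_num)
        simp only [Real.rpow_zero] at this
        linarith
      refine ⟨rfl, fun x => -gee15 0 f x, f 2⁻¹ + gee15 0 f (1 - 2⁻¹), ?_, ?_⟩
      · intro x y hx _ _
        have := hg x y hx.1 ‹y ∈ Set.Ioo (0:ℝ) 1›.1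
        simp only
        linarith
      · intro x hx
        have := hconst x hx.1 hx.2
        simp only
        linarith
    · -- power case
      right
      have h2pos : (0:ℝ) < 2 ^ α := Real.rpow_pos_of_pos (by norm_num) α
      have hlog2 : Real.log 2 ≠ 0 := ne_of_gt (Real.log_pos one_lt_two)
      have h2ne1 : (2:ℝ) ^ α ≠ 1 := by
        intro h
        apply h0
        have hl := Real.log_rpow (by norm_num : (0:ℝ) < 2) α
        rw [h, Real.log_one] at hl
        rcases mul_eq_zero.mp hl.symm with h' | h'
        · exact h'
        · exact absurd h' hlog2
      have hdne : (2:ℝ) ^ α - 1 ≠ 0 := sub_ne_zero.mpr h2ne1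
      set D : ℝ := gee15 α f 2 / (2 ^ α - 1) with hD
      have hgu : ∀ u : ℝ, 0 < u → gee15 α f u = D * (u ^ α - 1) := by
        intro u hu
        have a1 := F7 hfFE u 2 hu (by norm_num)
        have a2 := F7 hfFE 2 u (by norm_num) hu
        rw [show u * (2:ℝ) = 2 * u from by ring] at a1
        have key : gee15 α f u + u ^ α * gee15 α f 2 = gee15 α f 2 + 2 ^ α * gee15 α f u := by
          rw [a1] at a2; linarith
        rw [hD, div_mul_eq_mul_div, eq_div_iff hdne]
        linear_combination -key
      have hdiff : ∀ t : ℝ, 0 < t → t < 1 →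
          f t - f (1 - t) = D * t ^ α - D * (1 - t) ^ α := by
        intro t ht ht1
        have := F8 hfFE t ht ht1
        rw [hgu t ht, hgu (1 - t) (by linarith)] at this
        linarith
      have hfF : FE15 α (fun x => f x - D * x ^ α) := by
        intro x y hx hy hxy
        simp only
        have A := hf x y hx hy hxy
        have hx1 : (0:ℝ) < 1 - x := by linarith
        have hy1 : (0:ℝ) < 1 - y := by linarith
        have k1 : (1 - x) ^ α * (y / (1 - x)) ^ α = y ^ α := by
          rw [← Real.mul_rpow hx1.le (div_pos hy hx1).le]; congr 1; field_simp
        have k2 : (1 - y) ^ α * (x / (1 - y)) ^ α = x ^ α := by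
          rw [← Real.mul_rpow hy1.le (div_pos hx hy1).le]; congr 1; field_simp
        linear_combination A - D * k1 + D * k2
      have hsymF : ∀ t : ℝ, 0 < t → t < 1 →
          (fun x => f x - D * x ^ α) t = (fun x => f x - D * x ^ α) (1 - t) := by
        intro t ht ht1
        simp only
        have := hdiff t ht ht1
        linarith
      have hhalf : ∀ p : ℝ, 0 < p → p < 1 →
          (f p - D * p ^ α) * (1 - 2 * ((2:ℝ) ^ α)⁻¹)
            = (f 2⁻¹ - D * ((2:ℝ) ^ α)⁻¹) * (1 - p ^ α - (1 - p) ^ α) := by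
        intro p hp hp1
        have h := keyC hfF hsymF p 2⁻¹ hp hp1 (by norm_num) (by norm_num)
        rw [show (1:ℝ) - 2⁻¹ = 2⁻¹ from by norm_num,
          Real.inv_rpow (by norm_num : (0:ℝ) ≤ 2)] at h
        linear_combination h
      have hk : 1 - 2 * ((2:ℝ) ^ α)⁻¹ ≠ 0 := by
        intro h
        have h2 : (2:ℝ) ^ α = 2 := by
          field_simp at h
          linarith
        apply hα
        have hl := Real.log_rpow (by norm_num : (0:ℝ) < 2) α
        rw [h2] at hl
        have : α * Real.log 2 = 1 * Real.log 2 := by rw [one_mul]; linarith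
        exact mul_right_cancel₀ hlog2 this
      set c : ℝ := (f 2⁻¹ - D * ((2:ℝ) ^ α)⁻¹) / (1 - 2 * ((2:ℝ) ^ α)⁻¹) with hc
      have hcm : c * (1 - 2 * ((2:ℝ) ^ α)⁻¹) = f 2⁻¹ - D * ((2:ℝ) ^ α)⁻¹ :=
        div_mul_cancel₀ _ hk
      refine ⟨h0, D - c, -c, ?_⟩
      intro x hx
      obtain ⟨hx0, hx1⟩ := hx
      have H := hhalf x hx0 hx1
      have hfin : f x - D * x ^ α = c * (1 - x ^ α - (1 - x) ^ α) := by
        have h2 : (f x - D * x ^ α) * (1 - 2 * ((2:ℝ) ^ α)⁻¹)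
            = c * (1 - x ^ α - (1 - x) ^ α) * (1 - 2 * ((2:ℝ) ^ α)⁻¹) := by
          linear_combination H - (1 - x ^ α - (1 - x) ^ α) * hcm
        exact mul_right_cancel₀ hk h2
      linear_combination hfin
  · rintro (⟨h0, L, c, hL, hfx⟩ | ⟨h0, a, b, hfx⟩) x y hx hy hxy
    ·
      have hx1 : (0:ℝ) < 1 - x := by linarith
      have hy1 : (0:ℝ) < 1 - y := by linarith
      have hs : (0:ℝ) < 1 - x - y := by linarith
      have mx : x ∈ Set.Ioo (0:ℝ) 1 := ⟨hx, by linarith⟩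
      have my : y ∈ Set.Ioo (0:ℝ) 1 := ⟨hy, by linarith⟩
      have myx : y / (1 - x) ∈ Set.Ioo (0:ℝ) 1 :=
        ⟨div_pos hy hx1, (div_lt_one hx1).2 (by linarith)⟩
      have mxy : x / (1 - y) ∈ Set.Ioo (0:ℝ) 1 :=
        ⟨div_pos hx hy1, (div_lt_one hy1).2 (by linarith)⟩
      have cx : 1 - y / (1 - x) = (1 - x - y) / (1 - x) := by first | (field_simp; ring) | field_simp
      have cy : 1 - x / (1 - y) = (1 - x - y) / (1 - y) := by first | (field_simp; ring) | field_simp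
      rw [hfx x mx, hfx y my, hfx _ myx, hfx _ mxy, cx, cy]
      subst h0
      simp only [Real.rpow_zero, one_mul]
      have g1 : L ((1 - x) * ((1 - x - y) / (1 - x))) = L (1 - x) + L ((1 - x - y) / (1 - x)) :=
        hL _ _ ⟨hx1, by linarith⟩
          ⟨div_pos hs hx1, (div_lt_one hx1).2 (by linarith)⟩
          (by rw [show (1 - x) * ((1 - x - y) / (1 - x)) = 1 - x - y from by field_simp]
              exact ⟨hs, by linarith⟩)
      have g2 : L ((1 - y) * ((1 - x - y) / (1 - y))) = L (1 - y) + L ((1 - x - y) / (1 - y)) :=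
        hL _ _ ⟨hy1, by linarith⟩
          ⟨div_pos hs hy1, (div_lt_one hy1).2 (by linarith)⟩
          (by rw [show (1 - y) * ((1 - x - y) / (1 - y)) = 1 - x - y from by field_simp]
              exact ⟨hs, by linarith⟩)
      rw [show (1 - x) * ((1 - x - y) / (1 - x)) = 1 - x - y from by field_simp] at g1
      rw [show (1 - y) * ((1 - x - y) / (1 - y)) = 1 - x - y from by field_simp] at g2
      linarith
    ·
      have hx1 : (0:ℝ) < 1 - x := by linarith
      have hy1 : (0:ℝ) < 1 - y := by linarith
      have hs : (0:ℝ) < 1 - x - y := by linarith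
      have mx : x ∈ Set.Ioo (0:ℝ) 1 := ⟨hx, by linarith⟩
      have my : y ∈ Set.Ioo (0:ℝ) 1 := ⟨hy, by linarith⟩
      have myx : y / (1 - x) ∈ Set.Ioo (0:ℝ) 1 :=
        ⟨div_pos hy hx1, (div_lt_one hx1).2 (by linarith)⟩
      have mxy : x / (1 - y) ∈ Set.Ioo (0:ℝ) 1 :=
        ⟨div_pos hx hy1, (div_lt_one hy1).2 (by linarith)⟩
      have cx : 1 - y / (1 - x) = (1 - x - y) / (1 - x) := by first | (field_simp; ring) | field_simp
      have cy : 1 - x / (1 - y) = (1 - x - y) / (1 - y) := by first | (field_simp; ring) | field_simp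
      rw [hfx x mx, hfx y my, hfx _ myx, hfx _ mxy, cx, cy]
      have k1 : (1 - x) ^ α * (y / (1 - x)) ^ α = y ^ α := by
        rw [← Real.mul_rpow hx1.le (div_pos hy hx1).le]; congr 1; field_simp
      have k2 : (1 - x) ^ α * ((1 - x - y) / (1 - x)) ^ α = (1 - x - y) ^ α := by
        rw [← Real.mul_rpow hx1.le (div_pos hs hx1).le]; congr 1; field_simp
      have k3 : (1 - y) ^ α * (x / (1 - y)) ^ α = x ^ α := by
        rw [← Real.mul_rpow hy1.le (div_pos hx hy1).le]; congr 1; field_simp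
      have k4 : (1 - y) ^ α * ((1 - x - y) / (1 - y)) ^ α = (1 - x - y) ^ α := by
        rw [← Real.mul_rpow hy1.le (div_pos hs hy1).le]; congr 1; field_simp
      linear_combination a * k1 + b * k2 - a * k3 - b * k4
end

section
/- Let α ≠ 0 and a, b ∈ ℝ. The function h₁ : [0,1] → ℝ defined by h₁(0) = 0, h₁(x) = a x^α + b(1-x)^α - b for x ∈ (0,1), and h₁(1) = a - b satisfies h₁(x) + (1-x)^α h₁(y/(1-x)) = h₁(y) + (1-y)^α h₁(x/(1-y)) for all (x,y) ∈ D = {(x,y) : x, y ∈ [0,1), x+y ≤ 1}. -/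
theorem stmt_16 (α : ℝ) (hα : α ≠ 0) (a b : ℝ) (h₁ : ℝ → ℝ)
    (h0 : h₁ 0 = 0) (h1 : h₁ 1 = a - b)
    (hmid : ∀ x : ℝ, x ∈ Set.Ioo (0 : ℝ) 1 → h₁ x = a * x ^ α + b * (1 - x) ^ α - b) :
    ∀ x y : ℝ, 0 ≤ x → x < 1 → 0 ≤ y → y < 1 → x + y ≤ 1 →
      h₁ x + (1 - x) ^ α * h₁ (y / (1 - x)) =
        h₁ y + (1 - y) ^ α * h₁ (x / (1 - y)) := by
  intro x y hx hx1 hy hy1 hxy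
  have hx1' : (0:ℝ) < 1 - x := by linarith
  have hy1' : (0:ℝ) < 1 - y := by linarith
  have key : ∀ u v : ℝ, 0 ≤ u → 0 < v → (v : ℝ) ^ α * (u / v) ^ α = u ^ α := by
    intro u v hu hv
    rw [← Real.mul_rpow hv.le (div_nonneg hu hv.le), mul_div_cancel₀ _ hv.ne']
  rcases hx.eq_or_lt with hx0 | hx0
  · subst hx0
    simp [h0, Real.one_rpow]
  rcases hy.eq_or_lt with hy0 | hy0
  · subst hy0
    simp [h0, Real.one_rpow]
  have hxv := hmid x ⟨hx0, hx1⟩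
  have hyv := hmid y ⟨hy0, hy1⟩
  rcases hxy.eq_or_lt with heq | hlt
  · have hyx : y = 1 - x := by linarith
    have hxy' : x = 1 - y := by linarith
    have e1 : y / (1 - x) = 1 := by rw [hyx]; field_simp
    have e2 : x / (1 - y) = 1 := by rw [hxy']; field_simp
    rw [e1, e2, h1, hxv, hyv, hyx, hxy']
    ring
  · have h2 : y / (1 - x) ∈ Set.Ioo (0:ℝ) 1 := by
      constructor
      · positivity
      · rw [div_lt_one hx1']; linarith
    have h3 : x / (1 - y) ∈ Set.Ioo (0:ℝ) 1 := by
      constructor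
      · positivity
      · rw [div_lt_one hy1']; linarith
    rw [hxv, hyv, hmid _ h2, hmid _ h3]
    have e1 : 1 - y / (1 - x) = (1 - x - y) / (1 - x) := by field_simp
    have e2 : 1 - x / (1 - y) = (1 - x - y) / (1 - y) := by field_simp; ring
    rw [e1, e2]
    have hxyn : (0:ℝ) ≤ 1 - x - y := by linarith
    have k1 := key y (1 - x) hy hx1'
    have k2 := key (1 - x - y) (1 - x) hxyn hx1'
    have k3 := key x (1 - y) hx hy1'
    have k4 := key (1 - x - y) (1 - y) hxyn hy1'
    linear_combination a * k1 + b * k2 - a * k3 - b * k4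
end

section
/- Let α < 0, ε ≥ 0, and f : [0,1] → ℝ satisfy |f(x) + (1-x)^α f(y/(1-x)) - f(y) - (1-y)^α f(x/(1-y))| ≤ ε for all (x,y) ∈ D = {(x,y) : x, y ∈ [0,1), x+y ≤ 1}. Then f(0) = 0, and moreover f(1) = a - b where a, b are constants such that |f(x) - [a x^α + b(1-x)^α - b]| ≤ K(α)ε holds on (0,1) with K(α) = (8 + 6·2^α + 2^{-α})/(2^{1-α} - 1). Consequently with h₁(0)=0, h₁(x)=a x^α + b(1-x)^α - b on (0,1), h₁(1)=a-b, one has |f(x) - h₁(x)| ≤ K(α)ε for all x ∈ [0,1]. -/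
lemma aux_vanish (α Z C : ℝ) (hα : α < 0)
    (h : ∀ s : ℝ, 0 < s → s ≤ 1/2 → s ^ α * |Z| ≤ C) : Z = 0 := by
  by_contra hZ
  have hZ' : 0 < |Z| := abs_pos.mpr hZ
  set T : ℝ := max (C / |Z| + 1) 1 with hT
  have hT1 : 1 ≤ T := le_max_right _ _
  have hT0 : 0 < T := lt_of_lt_of_le one_pos hT1
  set s : ℝ := min (1/2) (T ^ α⁻¹) with hs
  have hTs : 0 < T ^ α⁻¹ := Real.rpow_pos_of_pos hT0 _
  have hs0 : 0 < s := lt_min (by norm_num) hTs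
  have hs2 : s ≤ 1/2 := min_le_left _ _
  have hsa : T ≤ s ^ α := by
    have h1 : (T ^ α⁻¹) ^ α = T := Real.rpow_inv_rpow hT0.le (ne_of_lt hα)
    calc T = (T ^ α⁻¹) ^ α := h1.symm
    _ ≤ s ^ α := Real.rpow_le_rpow_of_nonpos hs0 (min_le_right _ _) hα.le
  have := h s hs0 hs2
  have h2 : T * |Z| ≤ C := le_trans (by nlinarith) this
  have h3 : C / |Z| + 1 ≤ T := le_max_left _ _
  have h4 : C / |Z| * |Z| = C := div_mul_cancel₀ _ (ne_of_gt hZ')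
  nlinarith


noncomputable def auxF (α : ℝ) (f : ℝ → ℝ) (x y : ℝ) : ℝ :=
  f x + (1-x)^α * f (y/(1-x)) - f y - (1-y)^α * f (x/(1-y))

lemma aux_key (α : ℝ) (f : ℝ → ℝ) (s X Y : ℝ) (hs0 : 0 < s) (hs1 : s < 1)
    (hX0 : 0 < X) (hX1 : X < 1) (hY0 : 0 < Y) (hY1 : Y < 1) (hXY : X + Y ≤ 1) :
    s^α * auxF α f X Y =
      auxF α f (s*X) (s*Y) - auxF α f (s*X) (1-s) - auxF α f (1-s) (s*Y)
      - (1-s*X)^α * auxF α f (s*Y/(1-s*X)) ((1-s)/(1-s*X))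
      - (1-s*Y)^α * auxF α f ((1-s)/(1-s*Y)) (s*X/(1-s*Y)) := by
  have h1x : (0:ℝ) < 1 - s*X := by nlinarith
  have h1y : (0:ℝ) < 1 - s*Y := by nlinarith
  have h12 : (0:ℝ) < 1 - s*X - s*Y := by nlinarith
  have hXl : (0:ℝ) < 1 - X := by linarith
  have hYl : (0:ℝ) < 1 - Y := by linarith
  have m1 : (1-s*X)^α * (1 - s*Y/(1-s*X))^α = (1-s*X-s*Y)^α := by
    rw [show (1:ℝ) - s*Y/(1-s*X) = (1-s*X-s*Y)/(1-s*X) by field_simp,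
      Real.div_rpow h12.le h1x.le]
    rw [mul_div_cancel₀]
    exact ne_of_gt (Real.rpow_pos_of_pos h1x _)
  have m2 : (1-s*X)^α * (1 - (1-s)/(1-s*X))^α = s^α * (1-X)^α := by
    rw [show (1:ℝ) - (1-s)/(1-s*X) = (s*(1-X))/(1-s*X) by field_simp; ring,
      Real.div_rpow (by positivity) h1x.le, Real.mul_rpow hs0.le hXl.le]
    rw [mul_div_cancel₀]
    exact ne_of_gt (Real.rpow_pos_of_pos h1x _)
  have m3 : (1-s*Y)^α * (1 - s*X/(1-s*Y))^α = (1-s*X-s*Y)^α := by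
    rw [show (1:ℝ) - s*X/(1-s*Y) = (1-s*X-s*Y)/(1-s*Y) by field_simp; ring,
      Real.div_rpow h12.le h1y.le]
    rw [mul_div_cancel₀]
    exact ne_of_gt (Real.rpow_pos_of_pos h1y _)
  have m4 : (1-s*Y)^α * (1 - (1-s)/(1-s*Y))^α = s^α * (1-Y)^α := by
    rw [show (1:ℝ) - (1-s)/(1-s*Y) = (s*(1-Y))/(1-s*Y) by field_simp; ring,
      Real.div_rpow (by positivity) h1y.le, Real.mul_rpow hs0.le hYl.le]
    rw [mul_div_cancel₀]
    exact ne_of_gt (Real.rpow_pos_of_pos h1y _)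
  simp only [auxF]
  rw [show (1:ℝ)-(1-s) = s by ring]
  rw [mul_div_cancel_left₀ X hs0.ne', mul_div_cancel_left₀ Y hs0.ne']
  have hsX : s - s*X ≠ 0 := by nlinarith
  have hsY : s - s*Y ≠ 0 := by nlinarith
  rw [show ((1-s)/(1-s*X))/(1 - s*Y/(1-s*X)) = (1-s)/(1-s*X-s*Y) by
    field_simp [h1x.ne', h12.ne']]
  rw [show (s*Y/(1-s*X))/(1 - (1-s)/(1-s*X)) = Y/(1-X) by
    field_simp [h1x.ne', hXl.ne', hsX]; ring]
  rw [show (s*X/(1-s*Y))/(1 - (1-s)/(1-s*Y)) = X/(1-Y) by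
    field_simp [h1y.ne', hYl.ne', hsY]; ring]
  rw [show ((1-s)/(1-s*Y))/(1 - s*X/(1-s*Y)) = (1-s)/(1-s*X-s*Y) by
    rw [show (1:ℝ) - s*X/(1-s*Y) = (1-s*X-s*Y)/(1-s*Y) by field_simp; ring,
      div_div_div_cancel_right₀ h1y.ne']]
  linear_combination (f ((1-s)/(1-s*X-s*Y))) * (m1 - m3) - (f (Y/(1-X))) * m2 + (f (X/(1-Y))) * m4


lemma aux_tri (a b c d e : ℝ) : |a - b - c - d - e| ≤ |a| + |b| + |c| + |d| + |e| := by
  have h1 := le_abs_self a; have h1' := neg_abs_le a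
  have h2 := le_abs_self b; have h2' := neg_abs_le b
  have h3 := le_abs_self c; have h3' := neg_abs_le c
  have h4 := le_abs_self d; have h4' := neg_abs_le d
  have h5 := le_abs_self e; have h5' := neg_abs_le e
  rw [abs_le]; constructor <;> linarith

set_option maxHeartbeats 1000000 in
lemma aux_fzero (α ε : ℝ) (hα : α < 0) (hε : 0 ≤ ε) (f : ℝ → ℝ)
    (hf : ∀ x y : ℝ, 0 ≤ x → x < 1 → 0 ≤ y → y < 1 → x + y ≤ 1 →
      |f x + (1 - x) ^ α * f (y / (1 - x)) - f y - (1 - y) ^ α * f (x / (1 - y))| ≤ ε) :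
    ∀ X Y : ℝ, 0 < X → X < 1 → 0 < Y → Y < 1 → X + Y ≤ 1 → auxF α f X Y = 0 := by
  intro X Y hX0 hX1 hY0 hY1 hXY
  refine aux_vanish α _ ((3 + 2*(1/2:ℝ)^α)*ε) hα ?_
  intro s hs0 hs2
  have hs1 : s < 1 := by linarith
  have h1x : (0:ℝ) < 1 - s*X := by nlinarith
  have h1y : (0:ℝ) < 1 - s*Y := by nlinarith
  have key := aux_key α f s X Y hs0 hs1 hX0 hX1 hY0 hY1 hXY
  have B1 : |auxF α f (s*X) (s*Y)| ≤ ε := by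
    simp only [auxF]
    exact hf (s*X) (s*Y) (by positivity) (by nlinarith) (by positivity) (by nlinarith)
      (by nlinarith)
  have B2 : |auxF α f (s*X) (1-s)| ≤ ε := by
    simp only [auxF]
    exact hf (s*X) (1-s) (by positivity) (by nlinarith) (by linarith) (by linarith)
      (by nlinarith)
  have B3 : |auxF α f (1-s) (s*Y)| ≤ ε := by
    simp only [auxF]
    exact hf (1-s) (s*Y) (by linarith) (by linarith) (by positivity) (by nlinarith)
      (by nlinarith)
  have B4 : |auxF α f (s*Y/(1-s*X)) ((1-s)/(1-s*X))| ≤ ε := by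
    simp only [auxF]
    refine hf _ _ (div_nonneg (by positivity) h1x.le) ?_ (div_nonneg (by linarith) h1x.le) ?_ ?_
    · rw [div_lt_one h1x]; nlinarith
    · rw [div_lt_one h1x]; nlinarith
    · rw [← add_div, div_le_one h1x]; nlinarith
  have B5 : |auxF α f ((1-s)/(1-s*Y)) (s*X/(1-s*Y))| ≤ ε := by
    simp only [auxF]
    refine hf _ _ (div_nonneg (by linarith) h1y.le) ?_ (div_nonneg (by positivity) h1y.le) ?_ ?_
    · rw [div_lt_one h1y]; nlinarith
    · rw [div_lt_one h1y]; nlinarith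
    · rw [← add_div, div_le_one h1y]; nlinarith
  have c1 : (1-s*X)^α ≤ (1/2:ℝ)^α :=
    Real.rpow_le_rpow_of_nonpos (by norm_num) (by nlinarith) hα.le
  have c2 : (1-s*Y)^α ≤ (1/2:ℝ)^α :=
    Real.rpow_le_rpow_of_nonpos (by norm_num) (by nlinarith) hα.le
  have hA1 : (0:ℝ) ≤ (1-s*X)^α := Real.rpow_nonneg h1x.le α
  have hA2 : (0:ℝ) ≤ (1-s*Y)^α := Real.rpow_nonneg h1y.le α
  have hhalfpos : (0:ℝ) ≤ (1/2:ℝ)^α := Real.rpow_nonneg (by norm_num) α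
  have d1 : (1-s*X)^α * |auxF α f (s*Y/(1-s*X)) ((1-s)/(1-s*X))| ≤ (1/2:ℝ)^α * ε :=
    mul_le_mul c1 B4 (abs_nonneg _) hhalfpos
  have d2 : (1-s*Y)^α * |auxF α f ((1-s)/(1-s*Y)) (s*X/(1-s*Y))| ≤ (1/2:ℝ)^α * ε :=
    mul_le_mul c2 B5 (abs_nonneg _) hhalfpos
  calc s ^ α * |auxF α f X Y| = |s ^ α * auxF α f X Y| := by
        rw [abs_mul, abs_of_pos (Real.rpow_pos_of_pos hs0 α)]
    _ = |auxF α f (s*X) (s*Y) - auxF α f (s*X) (1-s) - auxF α f (1-s) (s*Y)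
        - (1-s*X)^α * auxF α f (s*Y/(1-s*X)) ((1-s)/(1-s*X))
        - (1-s*Y)^α * auxF α f ((1-s)/(1-s*Y)) (s*X/(1-s*Y))| := by rw [key]
    _ ≤ |auxF α f (s*X) (s*Y)| + |auxF α f (s*X) (1-s)| + |auxF α f (1-s) (s*Y)|
        + |(1-s*X)^α * auxF α f (s*Y/(1-s*X)) ((1-s)/(1-s*X))|
        + |(1-s*Y)^α * auxF α f ((1-s)/(1-s*Y)) (s*X/(1-s*Y))| := aux_tri _ _ _ _ _
    _ ≤ (3 + 2*(1/2:ℝ)^α)*ε := by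
        rw [abs_mul, abs_mul, abs_of_nonneg hA1, abs_of_nonneg hA2]
        linarith


lemma aux_core (α : ℝ) (hα : α < 0) (h : ℝ → ℝ)
    (E0 : ∀ x y : ℝ, 0 < x → x < 1 → 0 < y → y < 1 → x + y ≤ 1 →
      h x + (1-x)^α * h (y/(1-x)) = h y + (1-y)^α * h (x/(1-y)))
    (h1 : h 1 = 0) (hhalf : h (1/2) = 0) :
    ∀ z : ℝ, 0 < z → z < 1 → h z = 0 := by
  have hsym : ∀ x : ℝ, 0 < x → x < 1 → h x = h (1-x) := by
    intro x hx0 hx1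
    have e := E0 x (1-x) hx0 hx1 (by linarith) (by linarith) (by linarith)
    rw [show (1-x)/(1-x) = (1:ℝ) from div_self (by linarith),
        show x/(1-(1-x)) = (1:ℝ) by rw [sub_sub_cancel]; exact div_self (ne_of_gt hx0),
        h1] at e
    simpa using e
  have S1 : ∀ v : ℝ, 0 < v → v < 1 →
      h (v/2) + (1 - v/2)^α * h (v/(2-v)) = h v := by
    intro v hv0 hv1
    have e := E0 (1-v) (v/2) (by linarith) (by linarith) (by linarith) (by linarith)
      (by linarith)
    rw [sub_sub_cancel, show (v/2)/v = (1/2:ℝ) by field_simp, hhalf] at e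
    have hw0 : 0 < (1-v)/(1-v/2) := div_pos (by linarith) (by linarith)
    have hw1 : (1-v)/(1-v/2) < 1 := by
      rw [div_lt_one (by linarith)]; linarith
    rw [hsym _ hw0 hw1, show 1 - (1-v)/(1-v/2) = v/(2-v) by
      field_simp [show (1:ℝ)-v/2 ≠ 0 by linarith, show (2:ℝ)-v ≠ 0 by linarith]; ring] at e
    rw [← hsym v hv0 hv1] at e
    simpa using e.symm
  have S2 : ∀ t : ℝ, 0 < t → t < 1 →
      (1/2:ℝ)^α * h t = h (t/2) + (1 - t/2)^α * h (1/(2-t)) := by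
    intro t ht0 ht1
    have e := E0 (1/2) (t/2) (by norm_num) (by norm_num) (by linarith) (by linarith)
      (by linarith)
    rw [show (1:ℝ) - 1/2 = 1/2 by norm_num, show (t/2)/(1/2:ℝ) = t by ring,
      show (1/2:ℝ)/(1-t/2) = 1/(2-t) by rw [div_eq_div_iff (by linarith) (by linarith)]; ring,
      hhalf] at e
    simpa using e
  intro z hz0 hz1
  have h2z : (0:ℝ) < 2 - z := by linarith
  set zu := z/(2-z) with hzu
  have hu0 : 0 < zu := by positivity
  have hu1 : zu < 1 := by rw [hzu, div_lt_one h2z]; linarith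
  have e1 := S1 z hz0 hz1
  have e2 := S2 z hz0 hz1
  have hinv0 : (0:ℝ) < 1/(2-z) := by positivity
  have hinv1 : 1/(2-z) < 1 := by rw [div_lt_one h2z]; linarith
  rw [hsym _ hinv0 hinv1, show 1 - 1/(2-z) = (1-zu)/2 by
    rw [hzu]; field_simp; ring] at e2
  have e3 := S1 (1-zu) (by linarith) (by linarith)
  rw [show (1:ℝ) - (1-zu)/2 = (1+zu)/2 by ring, show (2:ℝ) - (1-zu) = 1+zu by ring,
    show (1-zu)/(1+zu) = 1-z by rw [hzu]; field_simp; ring,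
    ← hsym z hz0 hz1, ← hsym zu hu0 hu1] at e3
  have e4 : (1 - z/2)^α * ((1+zu)/2)^α = (1/2:ℝ)^α := by
    have hb : (1 - z/2) * ((1+zu)/2) = 1/2 := by rw [hzu]; field_simp; ring
    rw [← Real.mul_rpow (by linarith) (by positivity), hb]
  have hA : (2*(1/2:ℝ)^α - 1) * h z = 0 := by
    linear_combination e2 + ((1-z/2)^α) * e3 + e1 - (h z) * e4
  have hP : 1 < (1/2:ℝ)^α :=
    (Real.one_lt_rpow_iff_of_pos (by norm_num)).mpr (Or.inr ⟨by norm_num, hα⟩)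
  rcases mul_eq_zero.mp hA with h' | h'
  · linarith
  · exact h'

theorem stmt_17 (α ε : ℝ) (hα : α < 0) (hε : 0 ≤ ε) (f : ℝ → ℝ)
    (hf : ∀ x y : ℝ, 0 ≤ x → x < 1 → 0 ≤ y → y < 1 → x + y ≤ 1 →
      |f x + (1 - x) ^ α * f (y / (1 - x)) - f y - (1 - y) ^ α * f (x / (1 - y))| ≤ ε) :
    f 0 = 0 ∧ ∃ a b : ℝ,
      (∀ x : ℝ, x ∈ Set.Ioo (0 : ℝ) 1 →
        |f x - (a * x ^ α + b * (1 - x) ^ α - b)| ≤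
          (8 + 6 * 2 ^ α + 2 ^ (-α)) / (2 ^ (1 - α) - 1) * ε) ∧
      f 1 = a - b ∧
      (∀ x : ℝ, x ∈ Set.Icc (0 : ℝ) 1 →
        |f x - (if x = 0 then 0 else if x = 1 then a - b else
          a * x ^ α + b * (1 - x) ^ α - b)| ≤
          (8 + 6 * 2 ^ α + 2 ^ (-α)) / (2 ^ (1 - α) - 1) * ε) := by
  -- the constant is nonnegative
  have hden : (0:ℝ) < 2 ^ (1 - α) - 1 := by
    have : (1:ℝ) < 2 ^ (1 - α) :=
      (Real.one_lt_rpow_iff_of_pos (by norm_num)).mpr (Or.inl ⟨by norm_num, by linarith⟩)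
    linarith
  have hK : 0 ≤ (8 + 6 * 2 ^ α + 2 ^ (-α)) / (2 ^ (1 - α) - 1) * ε := by
    refine mul_nonneg (div_nonneg ?_ hden.le) hε
    have h1 : (0:ℝ) ≤ 2 ^ α := Real.rpow_nonneg (by norm_num) _
    have h2 : (0:ℝ) ≤ 2 ^ (-α) := Real.rpow_nonneg (by norm_num) _
    linarith
  -- f 0 = 0
  have hf0 : f 0 = 0 := by
    refine aux_vanish α _ (ε + |f 0|) hα ?_
    intro s hs0 hs2
    have e := hf (1-s) 0 (by linarith) (by linarith) le_rfl (by norm_num) (by linarith)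
    rw [sub_sub_cancel, zero_div, sub_zero, Real.one_rpow, div_one, one_mul] at e
    rw [show f (1-s) + s ^ α * f 0 - f 0 - f (1-s) = s ^ α * f 0 - f 0 by ring] at e
    have e2 : |s ^ α * f 0| - |f 0| ≤ |s ^ α * f 0 - f 0| := abs_sub_abs_le_abs_sub _ _
    rw [abs_mul, abs_of_pos (Real.rpow_pos_of_pos hs0 α)] at e2
    linarith
  -- exact functional equation
  have Feq := aux_fzero α ε hα hε f hf
  -- constants
  have hP : 1 < (1/2:ℝ)^α :=
    (Real.one_lt_rpow_iff_of_pos (by norm_num)).mpr (Or.inr ⟨by norm_num, hα⟩)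
  set P : ℝ := (1/2:ℝ)^α with hPdef
  set c : ℝ := f 1 with hcdef
  set b : ℝ := (f (1/2) - P * c)/(2*P - 1) with hbdef
  set a : ℝ := b + c with hadef
  -- H := f - a x^α - b (1-x)^α + b vanishes on (0,1)
  have Hz : ∀ z : ℝ, 0 < z → z < 1 → f z - a * z ^ α - b * (1-z) ^ α + b = 0 := by
    refine aux_core α hα (fun x => f x - a * x ^ α - b * (1-x) ^ α + b) ?_ ?_ ?_
    · intro x y hx0 hx1 hy0 hy1 hxy
      have h1x : (0:ℝ) < 1 - x := by linarith
      have h1y : (0:ℝ) < 1 - y := by linarith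
      have hb1 : (1-x)^α * (y/(1-x))^α = y^α := by
        rw [Real.div_rpow hy0.le h1x.le, mul_div_cancel₀]
        exact ne_of_gt (Real.rpow_pos_of_pos h1x _)
      have hb2 : (1-x)^α * (1 - y/(1-x))^α = (1-x-y)^α := by
        rw [show (1:ℝ) - y/(1-x) = (1-x-y)/(1-x) by field_simp,
          Real.div_rpow (by linarith) h1x.le, mul_div_cancel₀]
        exact ne_of_gt (Real.rpow_pos_of_pos h1x _)
      have hb3 : (1-y)^α * (x/(1-y))^α = x^α := by
        rw [Real.div_rpow hx0.le h1y.le, mul_div_cancel₀]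
        exact ne_of_gt (Real.rpow_pos_of_pos h1y _)
      have hb4 : (1-y)^α * (1 - x/(1-y))^α = (1-x-y)^α := by
        rw [show (1:ℝ) - x/(1-y) = (1-x-y)/(1-y) by field_simp; ring,
          Real.div_rpow (by linarith) h1y.le, mul_div_cancel₀]
        exact ne_of_gt (Real.rpow_pos_of_pos h1y _)
      have e := Feq x y hx0 hx1 hy0 hy1 hxy
      simp only [auxF] at e
      linear_combination e - a*hb1 - b*hb2 + a*hb3 + b*hb4
    · rw [Real.one_rpow, show (1:ℝ) - 1 = 0 by ring, Real.zero_rpow (ne_of_lt hα), hadef]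
      ring
    · have h2P : 2*P - 1 ≠ 0 := ne_of_gt (by linarith)
      rw [show (1:ℝ) - 1/2 = 1/2 by norm_num, ← hPdef, hbdef, hadef, hbdef]
      field_simp [h2P]
      ring
  refine ⟨hf0, a, b, ?_, ?_, ?_⟩
  · intro x hx
    obtain ⟨hx0, hx1⟩ := hx
    rw [show f x - (a * x ^ α + b * (1-x) ^ α - b) = 0 by
      have := Hz x hx0 hx1; linarith, abs_zero]
    exact hK
  · rw [hadef]; ring
  · intro x hx
    obtain ⟨hx0, hx1⟩ := hx
    by_cases hx0' : x = 0
    · subst hx0'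
      rw [if_pos rfl, hf0, sub_zero, abs_zero]
      exact hK
    by_cases hx1' : x = 1
    · subst hx1'
      rw [if_neg (by norm_num), if_pos rfl,
        show f 1 - (a - b) = 0 by rw [hadef]; ring, abs_zero]
      exact hK
    · rw [if_neg hx0', if_neg hx1']
      rw [show f x - (a * x ^ α + b * (1-x) ^ α - b) = 0 by
        have := Hz x (lt_of_le_of_ne hx0 (Ne.symm hx0')) (lt_of_le_of_ne hx1 hx1'); linarith,
        abs_zero]
      exact hK
end

section
/- Let α ≠ 1 and let (Iₙ), Iₙ : Γ°ₙ → ℝ, be a sequence of functions satisfying the α-recursivity inequality |Iₙ(p₁,...,pₙ) - Iₙ₋₁(p₁+p₂, p₃,...,pₙ) - (p₁+p₂)^α I₂(p₁/(p₁+p₂), p₂/(p₁+p₂))| ≤ ε_{n-1} for n ≥ 3 and the 3-semi-symmetry inequality |I₃(p₁,p₂,p₃) - I₃(p₁,p₃,p₂)| ≤ ε₁ on Γ°₃. Then the function f(x) = I₂(1-x, x) satisfies |f(x) + (1-x)^α f(y/(1-x)) - f(y) - (1-y)^α f(x/(1-y))| ≤ 2ε₂ + ε₁ for all (x,y) with x,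 y, x+y ∈ (0,1). -/
theorem stmt_19 (α : ℝ) (hα : α ≠ 1) (ε : ℕ → ℝ) (hε : ∀ n, 0 ≤ ε n)
    (I : (n : ℕ) → (Fin n → ℝ) → ℝ)
    (hrec : ∀ m : ℕ, 1 ≤ m → ∀ p : Fin (m + 2) → ℝ,
      (∀ i, 0 < p i) → (∑ i, p i) = 1 →
      |I (m + 2) p -
        I (m + 1) (Fin.cons (p 0 + p 1) (fun i : Fin m => p i.succ.succ)) -
        (p 0 + p 1) ^ α * I 2 ![p 0 / (p 0 + p 1), p 1 / (p 0 + p 1)]| ≤ ε (m + 1))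
    (hsym : ∀ p : Fin 3 → ℝ, (∀ i, 0 < p i) → (∑ i, p i) = 1 →
      |I 3 p - I 3 ![p 0, p 2, p 1]| ≤ ε 1)
    (f : ℝ → ℝ) (hf : ∀ x : ℝ, x ∈ Set.Ioo (0 : ℝ) 1 → f x = I 2 ![1 - x, x]) :
    ∀ x y : ℝ, 0 < x → 0 < y → x + y < 1 →
      |f x + (1 - x) ^ α * f (y / (1 - x)) - f y - (1 - y) ^ α * f (x / (1 - y))| ≤
        2 * ε 2 + ε 1 := by
  intro x y hx hy hxy
  have hx1 : x < 1 := by linarith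
  have hy1 : y < 1 := by linarith
  have h1x : (0:ℝ) < 1 - x := by linarith
  have h1y : (0:ℝ) < 1 - y := by linarith
  have hx0 : (1:ℝ) - x ≠ 0 := h1x.ne'
  have hy0 : (1:ℝ) - y ≠ 0 := h1y.ne'
  set p : Fin 3 → ℝ := ![1 - x - y, y, x] with hp
  set q : Fin 3 → ℝ := ![1 - x - y, x, y] with hq
  have hppos : ∀ i, 0 < p i := by
    intro i; fin_cases i
    · show (0:ℝ) < 1 - x - y; linarith
    · exact hy
    · exact hx
  have hqpos : ∀ i, 0 < q i := by
    intro i; fin_cases i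
    · show (0:ℝ) < 1 - x - y; linarith
    · exact hx
    · exact hy
  have hpsum : (∑ i, p i) = 1 := by
    rw [Fin.sum_univ_three]; show (1 - x - y) + y + x = 1; ring
  have hqsum : (∑ i, q i) = 1 := by
    rw [Fin.sum_univ_three]; show (1 - x - y) + x + y = 1; ring
  have h1 := hrec 1 le_rfl p hppos hpsum
  have h2 := hrec 1 le_rfl q hqpos hqsum
  have h3 := hsym p hppos hpsum
  have ep0 : p 0 + p 1 = 1 - x := by show (1 - x - y) + y = 1 - x; ring
  have eq0 : q 0 + q 1 = 1 - y := by show (1 - x - y) + x = 1 - y; ring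
  have hyx : y / (1 - x) ∈ Set.Ioo (0:ℝ) 1 := by
    constructor
    · positivity
    · rw [div_lt_one h1x]; linarith
  have hxy' : x / (1 - y) ∈ Set.Ioo (0:ℝ) 1 := by
    constructor
    · positivity
    · rw [div_lt_one h1y]; linarith
  have efx : I 2 (Fin.cons (p 0 + p 1) (fun i : Fin 1 => p i.succ.succ)) = f x := by
    have e : (Fin.cons (p 0 + p 1) (fun i : Fin 1 => p i.succ.succ) : Fin 2 → ℝ)
        = ![1 - x, x] := by
      funext i; fin_cases i
      · show (1 - x - y) + y = 1 - x; ring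
      · rfl
    rw [e, ← hf x ⟨hx, hx1⟩]
  have efy : I 2 (Fin.cons (q 0 + q 1) (fun i : Fin 1 => q i.succ.succ)) = f y := by
    have e : (Fin.cons (q 0 + q 1) (fun i : Fin 1 => q i.succ.succ) : Fin 2 → ℝ)
        = ![1 - y, y] := by
      funext i; fin_cases i
      · show (1 - x - y) + x = 1 - y; ring
      · rfl
    rw [e, ← hf y ⟨hy, hy1⟩]
  have efyx : I 2 ![p 0 / (p 0 + p 1), p 1 / (p 0 + p 1)] = f (y / (1 - x)) := by
    have e0 : p 0 / (p 0 + p 1) = 1 - y / (1 - x) := by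
      rw [ep0]; show (1 - x - y) / (1 - x) = 1 - y / (1 - x); field_simp; try ring
    have e1 : p 1 / (p 0 + p 1) = y / (1 - x) := by rw [ep0]; rfl
    rw [e0, e1, ← hf _ hyx]
  have efxy : I 2 ![q 0 / (q 0 + q 1), q 1 / (q 0 + q 1)] = f (x / (1 - y)) := by
    have e0 : q 0 / (q 0 + q 1) = 1 - x / (1 - y) := by
      rw [eq0]; show (1 - x - y) / (1 - y) = 1 - x / (1 - y); field_simp; try ring
    have e1 : q 1 / (q 0 + q 1) = x / (1 - y) := by rw [eq0]; rfl
    rw [e0, e1, ← hf _ hxy']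
  rw [efx, efyx, ep0] at h1
  rw [efy, efxy, eq0] at h2
  have hpq : ![p 0, p 2, p 1] = q := by
    funext i; fin_cases i <;> rfl
  rw [hpq] at h3
  have b1 := abs_le.mp h1
  have b2 := abs_le.mp h2
  have b3 := abs_le.mp h3
  rw [abs_le]
  norm_num at b1 b2 ⊢
  constructor <;> linarith [b1.1, b1.2, b2.1, b2.2, b3.1, b3.2]
end
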